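/- arXiv:math/0501109 — 2 statements merged into one kernel-verified Lean document; each statement's English description precedes it below -/
import Mathlib

section
/- Let m be a positive integer, 0 ≤ t ≤ m, and let r = (r_1 < r_2 < ⋯ < r_t) be a strictly increasing sequence in {1,…,m}. Define C^m_r = {a ∈ M_{m,t}(ℂ) : a_{r_j, j} ≠ 0 for j = 1,…,t, and a_{i,j} = 0 whenever i < r_j}, and Σ^{m,t}_r = {(y,z) ∈ S_m^{S²_{m−t}} × S_m^{S¹_t} : z ≤ y in the Bruhat order and z(j) = r_j for j = 1,…,t}. Then C^m_r is the union over (y,z) ∈ Σ^{m,t}_r of the sets (B_m⁺ y B_m⁺ ∩ B_m⁻·z)·I^{m,t}_t, and these sets are pairwise disjoint. -/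
open Matrix

noncomputable section

abbrev Mat (k l : ℕ) := Matrix (Fin k) (Fin l) ℂ

/-- permutation matrix: (i,j) entry is 1 exactly when i = w j -/
def permMat (k : ℕ) (w : Equiv.Perm (Fin k)) : Mat k k :=
  fun i j => if i = w j then 1 else 0

/-- invertible upper triangular matrices -/
def Bp (k : ℕ) : Set (Mat k k) := {M | IsUnit M ∧ ∀ i j : Fin k, j < i → M i j = 0}

/-- invertible lower triangular matrices -/
def Bm (k : ℕ) : Set (Mat k k) := {M | IsUnit M ∧ ∀ i j : Fin k, i < j → M i j = 0}

def dcPlus {k l : ℕ} (w : Mat k l) : Set (Mat k l) :=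
  {x | ∃ b ∈ Bp k, ∃ b' ∈ Bp l, x = b * w * b'}

def dcMinus {k l : ℕ} (w : Mat k l) : Set (Mat k l) :=
  {x | ∃ b ∈ Bm k, ∃ b' ∈ Bm l, x = b * w * b'}

/-- comparison of finsets: sorted lists compare termwise -/
def finsetLE {k : ℕ} (A B : Finset (Fin k)) : Prop :=
  List.Forall₂ (· ≤ ·) (A.sort (· ≤ ·)) (B.sort (· ≤ ·))

/-- Bruhat order on S_k -/
def bruhatLE {k : ℕ} (y z : Equiv.Perm (Fin k)) : Prop :=
  ∀ p : Fin k, finsetLE ((Finset.Iic p).image y) ((Finset.Iic p).image z)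

/-- Zariski closure in the space of k×l matrices -/
def zClosure {k l : ℕ} (S : Set (Mat k l)) : Set (Mat k l) :=
  {x | ∀ p : MvPolynomial (Fin k × Fin l) ℂ,
      (∀ y ∈ S, MvPolynomial.eval (fun q => y q.1 q.2) p = 0) →
      MvPolynomial.eval (fun q => x q.1 q.2) p = 0}

def revP (k : ℕ) : Equiv.Perm (Fin k) := ⟨Fin.rev, Fin.rev, Fin.rev_rev, Fin.rev_rev⟩

def fe (m n : ℕ) : Fin n ⊕ Fin m ≃ Fin (m + n) :=
  finSumFinEquiv.trans (finCongr (Nat.add_comm n m))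

/-- the block matrix [[w∘ⁿ, 0],[x, w∘ᵐ]] -/
def embMat (m n : ℕ) (x : Mat m n) : Mat (m+n) (m+n) :=
  Matrix.reindex (fe m n) (fe m n)
    (Matrix.fromBlocks (permMat n (revP n)) 0 x (permMat m (revP m)))

/-- the permutation (w∘ⁿ,w∘ᵐ) ∈ S_{m+n} -/
def wnmPerm (m n : ℕ) : Equiv.Perm (Fin (m+n)) :=
  ((fe m n).symm.trans (Equiv.sumCongr (revP n) (revP m))).trans (fe m n)

def Pset (m n : ℕ) (w : Equiv.Perm (Fin (m+n))) : Set (Mat m n) :=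
  {x | embMat m n x ∈ dcPlus (permMat (m+n) w)}

/-- the matrix with t×t identity in upper-left corner, zeros elsewhere -/
def Imn (m n t : ℕ) : Mat m n := fun i j => if (i:ℕ) = (j:ℕ) ∧ (i:ℕ) < t then 1 else 0

/-- diagonal matrix with first t diagonal entries 0 and the rest 1 -/
def Jk (k t : ℕ) : Mat k k := fun i j => if (i:ℕ) = (j:ℕ) ∧ t ≤ (i:ℕ) then 1 else 0

noncomputable def subRank {k l : ℕ} (x : Mat k l) (R : Finset (Fin k)) (C : Finset (Fin l)) : ℕ :=
  (x.submatrix (fun i : {a // a ∈ R} => i.1) (fun j : {a // a ∈ C} => j.1)).rank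

/-- v(1) < ⋯ < v(t) -/
def headMono {k : ℕ} (t : ℕ) (v : Equiv.Perm (Fin k)) : Prop :=
  ∀ i j : Fin k, i < j → (j:ℕ) < t → v i < v j

/-- u(t+1) < ⋯ < u(k) -/
def tailMono {k : ℕ} (t : ℕ) (u : Equiv.Perm (Fin k)) : Prop :=
  ∀ i j : Fin k, i < j → t ≤ (i:ℕ) → u i < u j

def embPerm {k t : ℕ} (h : t ≤ k) (τ : Equiv.Perm (Fin t)) : Equiv.Perm (Fin k) :=
  τ.viaFintypeEmbedding (Fin.castLEEmb h)
/-- C_{y,z} = (B_m⁺ y B_m⁺ ∩ B_m⁻·z)·I^{m,t}_t ⊆ M_{m,t} -/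
def Cset (m t : ℕ) (y z : Equiv.Perm (Fin m)) : Set (Mat m t) :=
  {c | ∃ g ∈ dcPlus (permMat m y) ∩ {g | ∃ b ∈ Bm m, g = b * permMat m z},
    c = g * Imn m t t}

/-- the column-echelon variety C^m_r -/
def Cmr (m t : ℕ) (r : Fin t → Fin m) : Set (Mat m t) :=
  {a | (∀ j : Fin t, a (r j) j ≠ 0) ∧ ∀ (i : Fin m) (j : Fin t), i < r j → a i j = 0}

namespace S15

open Submodule Module Finset

variable {m : ℕ}

/-- vectors supported on coordinates `< i` -/
def FF (m i : ℕ) : Submodule ℂ (Fin m → ℂ) where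
  carrier := {v | ∀ k : Fin m, i ≤ (k : ℕ) → v k = 0}
  add_mem' := by intro a b ha hb k hk; simp only [Pi.add_apply, ha k hk, hb k hk, add_zero]
  zero_mem' := by intro k hk; rfl
  smul_mem' := by intro c a ha k hk; simp only [Pi.smul_apply, ha k hk, smul_zero]

/-- vectors supported on coordinates `≥ i` -/
def GG (m i : ℕ) : Submodule ℂ (Fin m → ℂ) where
  carrier := {v | ∀ k : Fin m, (k : ℕ) < i → v k = 0}
  add_mem' := by intro a b ha hb k hk; simp only [Pi.add_apply, ha k hk, hb k hk, add_zero]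
  zero_mem' := by intro k hk; rfl
  smul_mem' := by intro c a ha k hk; simp only [Pi.smul_apply, ha k hk, smul_zero]

lemma mem_FF {i : ℕ} {v : Fin m → ℂ} : v ∈ FF m i ↔ ∀ k : Fin m, i ≤ (k : ℕ) → v k = 0 :=
  Iff.rfl

lemma mem_GG {i : ℕ} {v : Fin m → ℂ} : v ∈ GG m i ↔ ∀ k : Fin m, (k : ℕ) < i → v k = 0 :=
  Iff.rfl

lemma FF_top {i : ℕ} (h : m ≤ i) : FF m i = ⊤ := by
  ext v; simp only [mem_FF, Submodule.mem_top, iff_true]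
  intro k hk; exact absurd (lt_of_lt_of_le k.isLt h) (not_lt.2 hk)

lemma GG_zero : GG m 0 = ⊤ := by
  ext v; simp only [mem_GG, Submodule.mem_top, iff_true]
  intro k hk; omega

lemma FF_zero : FF m 0 = ⊥ := by
  ext v; simp only [mem_FF, Submodule.mem_bot]
  constructor
  · intro h; funext k; exact h k (Nat.zero_le _)
  · rintro rfl; intro k _; rfl

lemma GG_bot {i : ℕ} (h : m ≤ i) : GG m i = ⊥ := by
  ext v; simp only [mem_GG, Submodule.mem_bot]
  constructor
  · intro hv; funext k; exact hv k (lt_of_lt_of_le k.isLt h)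
  · rintro rfl; intro k _; rfl

lemma FF_mono {i i' : ℕ} (h : i ≤ i') : FF m i ≤ FF m i' := by
  intro v hv k hk; exact hv k (le_trans h hk)

lemma GG_mono {i i' : ℕ} (h : i ≤ i') : GG m i' ≤ GG m i := by
  intro v hv k hk; exact hv k (lt_of_lt_of_le hk h)

lemma FF_inf_GG {i : ℕ} : FF m i ⊓ GG m i = ⊥ := by
  ext v
  simp only [Submodule.mem_inf, mem_FF, mem_GG, Submodule.mem_bot]
  constructor
  · rintro ⟨h1, h2⟩; funext k
    rcases lt_or_ge (k : ℕ) i with h | h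
    · exact h2 k h
    · exact h1 k h
  · rintro rfl; exact ⟨fun _ _ => rfl, fun _ _ => rfl⟩

/-- standard basis vector -/
def eVec (m : ℕ) (p : Fin m) : Fin m → ℂ := fun i => if i = p then 1 else 0

lemma eVec_self (p : Fin m) : eVec m p p = 1 := by simp [eVec]

lemma eVec_ne {p q : Fin m} (h : q ≠ p) : eVec m p q = 0 := by simp [eVec, h]

/-- columns of a matrix -/
def colV {l : ℕ} (M : Mat m l) (j : Fin l) : Fin m → ℂ := fun i => M i j

lemma sum_smul_eVec (v : Fin m → ℂ) : ∑ k, v k • eVec m k = v := by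
  funext i
  simp only [Finset.sum_apply, Pi.smul_apply, eVec, smul_eq_mul, mul_ite, mul_one, mul_zero]
  rw [Finset.sum_ite_eq Finset.univ i v]
  simp

/-- membership in span of some eVec's constrains support -/
lemma span_eVec_le {S : Set (Fin m)} {p : Fin m} (hp : p ∉ S) :
    ∀ v ∈ span ℂ (eVec m '' S), v p = 0 := by
  intro v hv
  have : span ℂ (eVec m '' S) ≤ LinearMap.ker (LinearMap.proj (R := ℂ) (φ := fun _ : Fin m => ℂ) p) := by
    rw [Submodule.span_le]
    rintro _ ⟨q, hq, rfl⟩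
    simp only [SetLike.mem_coe, LinearMap.mem_ker, LinearMap.proj_apply]
    exact eVec_ne (by rintro rfl; exact hp hq)
  exact this hv

end S15


namespace S15
open Submodule Module Finset
variable {m : ℕ}

/-! ### permutation matrix lemmas -/

lemma mul_permMat {l : ℕ} (M : Matrix (Fin l) (Fin m) ℂ) (w : Equiv.Perm (Fin m))
    (i : Fin l) (j : Fin m) : (M * permMat m w) i j = M i (w j) := by
  simp only [Matrix.mul_apply, permMat, mul_ite, mul_one, mul_zero]
  rw [Finset.sum_ite_eq' Finset.univ (w j) (fun k => M i k)]
  simp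

lemma permMat_mul {l : ℕ} (M : Matrix (Fin m) (Fin l) ℂ) (w : Equiv.Perm (Fin m))
    (i : Fin m) (j : Fin l) : (permMat m w * M) i j = M (w⁻¹ i) j := by
  simp only [Matrix.mul_apply, permMat]
  have : ∀ k : Fin m, (if i = w k then 1 else 0) * M k j = if k = w⁻¹ i then M k j else 0 := by
    intro k
    by_cases h : k = w⁻¹ i
    · subst h; simp [Equiv.apply_symm_apply]
    · have : i ≠ w k := by
        intro he; exact h (by simp [he])
      simp [this, h]
      intro hk; exact absurd hk h
  rw [Finset.sum_congr rfl fun k _ => this k]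
  rw [Finset.sum_ite_eq' Finset.univ (w⁻¹ i) (fun k => M k j)]
  simp

lemma permMat_mul_permMat (w w' : Equiv.Perm (Fin m)) :
    permMat m w * permMat m w' = permMat m (w * w') := by
  ext i j
  rw [mul_permMat]
  rfl

lemma permMat_one : permMat m 1 = 1 := by
  ext i j
  simp [permMat, Matrix.one_apply, eq_comm]
  split_ifs <;> simp_all

lemma isUnit_permMat (w : Equiv.Perm (Fin m)) : IsUnit (permMat m w) := by
  have h1 : permMat m w * permMat m w⁻¹ = 1 := by
    rw [permMat_mul_permMat]
    have : w * w⁻¹ = 1 := by group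
    rw [this, permMat_one]
  have h2 : permMat m w⁻¹ * permMat m w = 1 := by
    rw [permMat_mul_permMat]
    have : w⁻¹ * w = 1 := by group
    rw [this, permMat_one]
  exact ⟨⟨permMat m w, permMat m w⁻¹, h1, h2⟩, rfl⟩

lemma colV_mul_permMat {w : Equiv.Perm (Fin m)} (M : Mat m m) (j : Fin m) :
    colV (M * permMat m w) j = colV M (w j) := by
  funext i; exact mul_permMat M w i j

lemma mulVec_eVec (M : Mat m m) (p : Fin m) : M *ᵥ eVec m p = colV M p := by
  funext i
  simp only [Matrix.mulVec, dotProduct, eVec, mul_ite, mul_one, mul_zero]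
  rw [Finset.sum_ite_eq' Finset.univ p (fun k => M i k)]
  simp [colV]

/-! ### triangular matrices -/

lemma bp_blockTri {u : Mat m m} (hu : u ∈ Bp m) : u.BlockTriangular id :=
  fun i j h => hu.2 i j h

lemma bm_blockTri {u : Mat m m} (hu : u ∈ Bm m) : u.BlockTriangular (OrderDual.toDual) :=
  fun i j h => hu.2 i j h

lemma bp_isUnit_det {u : Mat m m} (hu : u ∈ Bp m) : IsUnit u.det :=
  (Matrix.isUnit_iff_isUnit_det u).1 hu.1

lemma bp_diag_ne {u : Mat m m} (hu : u ∈ Bp m) (k : Fin m) : u k k ≠ 0 := by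
  have hdet : u.det = ∏ i, u i i := Matrix.det_of_upperTriangular (bp_blockTri hu)
  have := (bp_isUnit_det hu)
  rw [hdet, isUnit_iff_ne_zero] at this
  intro h
  exact this (Finset.prod_eq_zero (Finset.mem_univ k) h)

lemma bm_diag_ne {u : Mat m m} (hu : u ∈ Bm m) (k : Fin m) : u k k ≠ 0 := by
  have hdet : u.det = ∏ i, u i i := Matrix.det_of_lowerTriangular u (bm_blockTri hu)
  have := (Matrix.isUnit_iff_isUnit_det u).1 hu.1
  rw [hdet, isUnit_iff_ne_zero] at this
  intro h
  exact this (Finset.prod_eq_zero (Finset.mem_univ k) h)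

lemma bp_inv_mem {u : Mat m m} (hu : u ∈ Bp m) : u⁻¹ ∈ Bp m := by
  have hdet := (bp_isUnit_det hu)
  have : Invertible u := u.invertibleOfIsUnitDet hdet
  refine ⟨?_, ?_⟩
  · exact ⟨⟨u⁻¹, u, Matrix.nonsing_inv_mul u hdet, Matrix.mul_nonsing_inv u hdet⟩, rfl⟩
  · exact fun i j h => Matrix.blockTriangular_inv_of_blockTriangular (bp_blockTri hu) h

lemma bm_inv_mem {u : Mat m m} (hu : u ∈ Bm m) : u⁻¹ ∈ Bm m := by
  have hdet := (Matrix.isUnit_iff_isUnit_det u).1 hu.1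
  have : Invertible u := u.invertibleOfIsUnitDet hdet
  refine ⟨?_, ?_⟩
  · exact ⟨⟨u⁻¹, u, Matrix.nonsing_inv_mul u hdet, Matrix.mul_nonsing_inv u hdet⟩, rfl⟩
  · exact fun i j h =>
      Matrix.blockTriangular_inv_of_blockTriangular (bm_blockTri hu)
        (show OrderDual.toDual j < OrderDual.toDual i from h)

lemma bp_mulVec_FF {u : Mat m m} (hu : u ∈ Bp m) {i : ℕ} {v : Fin m → ℂ} (hv : v ∈ FF m i) :
    u *ᵥ v ∈ FF m i := by
  intro k hk
  simp only [Matrix.mulVec, dotProduct]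
  apply Finset.sum_eq_zero
  intro l _
  rcases lt_or_ge (l : ℕ) (k : ℕ) with h | h
  · rw [hu.2 k l (by exact_mod_cast h), zero_mul]
  · rw [hv l (le_trans hk h), mul_zero]

lemma bm_mulVec_GG {b : Mat m m} (hb : b ∈ Bm m) {i : ℕ} {v : Fin m → ℂ} (hv : v ∈ GG m i) :
    b *ᵥ v ∈ GG m i := by
  intro k hk
  simp only [Matrix.mulVec, dotProduct]
  apply Finset.sum_eq_zero
  intro l _
  rcases lt_or_ge (k : ℕ) (l : ℕ) with h | h
  · rw [hb.2 k l (by exact_mod_cast h), zero_mul]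
  · rw [hv l (lt_of_le_of_lt h hk), mul_zero]

lemma isUnit_mulVec_cancel {u : Mat m m} (hu : IsUnit u) (v : Fin m → ℂ) :
    u *ᵥ (u⁻¹ *ᵥ v) = v := by
  rw [Matrix.mulVec_mulVec, Matrix.mul_nonsing_inv u ((Matrix.isUnit_iff_isUnit_det u).1 hu),
    Matrix.one_mulVec]

lemma isUnit_mulVec_cancel' {u : Mat m m} (hu : IsUnit u) (v : Fin m → ℂ) :
    u⁻¹ *ᵥ (u *ᵥ v) = v := by
  rw [Matrix.mulVec_mulVec, Matrix.nonsing_inv_mul u ((Matrix.isUnit_iff_isUnit_det u).1 hu),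
    Matrix.one_mulVec]

lemma isUnit_mulVecLin_injective {u : Mat m m} (hu : IsUnit u) :
    Function.Injective u.mulVecLin := by
  intro x y hxy
  have : u⁻¹ *ᵥ (u *ᵥ x) = u⁻¹ *ᵥ (u *ᵥ y) := by
    simpa only [Matrix.mulVecLin_apply] using congrArg (fun z => u⁻¹ *ᵥ z) hxy
  rwa [isUnit_mulVec_cancel' hu, isUnit_mulVec_cancel' hu] at this

/-- transport of FF-intersection dimension along upper triangular maps -/
lemma finrank_map_inf_FF {u : Mat m m} (hu : u ∈ Bp m) (W : Submodule ℂ (Fin m → ℂ)) (i : ℕ) :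
    finrank ℂ ↥((Submodule.map u.mulVecLin W) ⊓ FF m i) = finrank ℂ ↥(W ⊓ FF m i) := by
  have hmap : (Submodule.map u.mulVecLin W) ⊓ FF m i
      = Submodule.map u.mulVecLin (W ⊓ FF m i) := by
    apply le_antisymm
    · rintro x ⟨⟨w, hw, rfl⟩, hx⟩
      refine ⟨w, ⟨hw, ?_⟩, rfl⟩
      have : w = u⁻¹ *ᵥ (u *ᵥ w) := (isUnit_mulVec_cancel' hu.1 w).symm
      rw [this]
      exact bp_mulVec_FF (bp_inv_mem hu) hx
    · rintro x ⟨w, ⟨hw1, hw2⟩, rfl⟩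
      exact ⟨⟨w, hw1, rfl⟩, bp_mulVec_FF hu hw2⟩
  rw [hmap]
  exact (LinearEquiv.finrank_eq
    (Submodule.equivMapOfInjective _ (isUnit_mulVecLin_injective hu.1) (W ⊓ FF m i))).symm

lemma finrank_map_inf_GG {b : Mat m m} (hb : b ∈ Bm m) (W : Submodule ℂ (Fin m → ℂ)) (i : ℕ) :
    finrank ℂ ↥((Submodule.map b.mulVecLin W) ⊓ GG m i) = finrank ℂ ↥(W ⊓ GG m i) := by
  have hmap : (Submodule.map b.mulVecLin W) ⊓ GG m i
      = Submodule.map b.mulVecLin (W ⊓ GG m i) := by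
    apply le_antisymm
    · rintro x ⟨⟨w, hw, rfl⟩, hx⟩
      refine ⟨w, ⟨hw, ?_⟩, rfl⟩
      have : w = b⁻¹ *ᵥ (b *ᵥ w) := (isUnit_mulVec_cancel' hb.1 w).symm
      rw [this]
      exact bm_mulVec_GG (bm_inv_mem hb) hx
    · rintro x ⟨w, ⟨hw1, hw2⟩, rfl⟩
      exact ⟨⟨w, hw1, rfl⟩, bm_mulVec_GG hb hw2⟩
  rw [hmap]
  exact (LinearEquiv.finrank_eq
    (Submodule.equivMapOfInjective _ (isUnit_mulVecLin_injective hb.1) (W ⊓ GG m i))).symm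

end S15


namespace S15
open Submodule Module Finset
variable {m : ℕ}

section TRI

variable {ι : Type*} [Fintype ι] {v : ι → (Fin m → ℂ)} {σ : ι → Fin m}

lemma eval_min (hinj : Function.Injective σ) (hp : ∀ k, v k (σ k) ≠ 0)
    (hs : ∀ k, v k ∈ GG m (σ k)) (c : ι → ℂ) (hc : ∃ k, c k ≠ 0) :
    ∃ k₀, c k₀ ≠ 0 ∧ (∀ k, c k ≠ 0 → σ k₀ ≤ σ k) ∧
      (∑ k, c k • v k) (σ k₀) = c k₀ * v k₀ (σ k₀) := by
  classical
  obtain ⟨k₁, hk₁⟩ := hc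
  obtain ⟨k₀, hk₀S, hk₀min⟩ := Finset.exists_min_image
    (Finset.univ.filter fun k => c k ≠ 0) σ ⟨k₁, by simp [hk₁]⟩
  have hck₀ : c k₀ ≠ 0 := (Finset.mem_filter.1 hk₀S).2
  refine ⟨k₀, hck₀, fun k hk => hk₀min k (by simp [hk]), ?_⟩
  rw [Finset.sum_apply]
  rw [Finset.sum_eq_single k₀]
  · simp
  · intro k _ hkne
    by_cases hck : c k = 0
    · simp [hck]
    · have hle : σ k₀ ≤ σ k := hk₀min k (by simp [hck])
      have hlt : ((σ k₀ : Fin m) : ℕ) < ((σ k : Fin m) : ℕ) := by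
        have : σ k₀ ≠ σ k := fun he => hkne (hinj he).symm
        exact lt_of_le_of_ne hle (by simpa [Fin.val_inj] using this)
      have := (hs k) (σ k₀) hlt
      simp [this]
  · intro h; exact absurd (Finset.mem_univ k₀) h

lemma eval_max (hinj : Function.Injective σ) (hp : ∀ k, v k (σ k) ≠ 0)
    (hs : ∀ k, v k ∈ FF m ((σ k : ℕ) + 1)) (c : ι → ℂ) (hc : ∃ k, c k ≠ 0) :
    ∃ k₀, c k₀ ≠ 0 ∧ (∀ k, c k ≠ 0 → σ k ≤ σ k₀) ∧
      (∑ k, c k • v k) (σ k₀) = c k₀ * v k₀ (σ k₀) := by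
  classical
  obtain ⟨k₁, hk₁⟩ := hc
  obtain ⟨k₀, hk₀S, hk₀max⟩ := Finset.exists_max_image
    (Finset.univ.filter fun k => c k ≠ 0) σ ⟨k₁, by simp [hk₁]⟩
  have hck₀ : c k₀ ≠ 0 := (Finset.mem_filter.1 hk₀S).2
  refine ⟨k₀, hck₀, fun k hk => hk₀max k (by simp [hk]), ?_⟩
  rw [Finset.sum_apply]
  rw [Finset.sum_eq_single k₀]
  · simp
  · intro k _ hkne
    by_cases hck : c k = 0
    · simp [hck]
    · have hle : σ k ≤ σ k₀ := hk₀max k (by simp [hck])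
      have hlt : ((σ k₀ : Fin m) : ℕ) + 1 ≤ ((σ k : Fin m) : ℕ) + 1 → False := by
        intro hcon
        have : σ k₀ ≤ σ k := by
          exact_mod_cast Nat.le_of_succ_le_succ hcon
        have heq : σ k = σ k₀ := le_antisymm hle this
        exact hkne (hinj heq)
      have hlt' : ((σ k : Fin m) : ℕ) + 1 ≤ ((σ k₀ : Fin m) : ℕ) := by
        rcases lt_or_ge ((σ k : Fin m) : ℕ) ((σ k₀ : Fin m) : ℕ) with h | h
        · omega
        · exact absurd (by omega) hlt
      have := (hs k) (σ k₀) hlt'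
      simp [this]
  · intro h; exact absurd (Finset.mem_univ k₀) h

lemma tri_indep_top (hinj : Function.Injective σ) (hp : ∀ k, v k (σ k) ≠ 0)
    (hs : ∀ k, v k ∈ GG m (σ k)) : LinearIndependent ℂ v := by
  rw [Fintype.linearIndependent_iff]
  intro c hsum k
  by_contra hck
  obtain ⟨k₀, h1, _, h4⟩ := eval_min hinj hp hs c ⟨k, hck⟩
  rw [hsum] at h4
  exact (mul_ne_zero h1 (hp k₀)) h4.symm

lemma tri_indep_bot (hinj : Function.Injective σ) (hp : ∀ k, v k (σ k) ≠ 0)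
    (hs : ∀ k, v k ∈ FF m ((σ k : ℕ) + 1)) : LinearIndependent ℂ v := by
  rw [Fintype.linearIndependent_iff]
  intro c hsum k
  by_contra hck
  obtain ⟨k₀, h1, _, h4⟩ := eval_max hinj hp hs c ⟨k, hck⟩
  rw [hsum] at h4
  exact (mul_ne_zero h1 (hp k₀)) h4.symm

lemma tri_span_inf_top (hinj : Function.Injective σ) (hp : ∀ k, v k (σ k) ≠ 0)
    (hs : ∀ k, v k ∈ GG m (σ k)) (i : ℕ) :
    span ℂ (Set.range v) ⊓ GG m i = span ℂ (v '' {k | i ≤ (σ k : ℕ)}) := by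
  apply le_antisymm
  · rintro x ⟨hx1, hx2⟩
    obtain ⟨c, rfl⟩ := (mem_span_range_iff_exists_fun ℂ).1 hx1
    have hzero : ∀ k, (σ k : ℕ) < i → c k = 0 := by
      intro k hk
      by_contra hck
      obtain ⟨k₀, h1, h2, h4⟩ := eval_min hinj hp hs c ⟨k, hck⟩
      have hlt : ((σ k₀ : Fin m) : ℕ) < i := lt_of_le_of_lt (h2 k hck) hk
      have hz := hx2 (σ k₀) hlt
      rw [h4] at hz
      exact (mul_ne_zero h1 (hp k₀)) hz
    classical
    have hrw : (∑ k, c k • v k)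
        = ∑ k ∈ Finset.univ.filter (fun k => i ≤ (σ k : ℕ)), c k • v k := by
      symm
      apply Finset.sum_subset (Finset.subset_univ _)
      intro k _ hk
      have : (σ k : ℕ) < i := by
        by_contra hcon
        exact hk (Finset.mem_filter.2 ⟨Finset.mem_univ _, not_lt.1 hcon⟩)
      rw [hzero k this, zero_smul]
    rw [hrw]
    apply Submodule.sum_mem
    intro k hk
    exact Submodule.smul_mem _ _ (Submodule.subset_span ⟨k, (Finset.mem_filter.1 hk).2, rfl⟩)
  · apply le_inf
    · exact span_mono (Set.image_subset_range v _)
    · rw [span_le]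
      rintro _ ⟨k, hk, rfl⟩
      exact GG_mono hk (hs k)

lemma tri_span_inf_bot (hinj : Function.Injective σ) (hp : ∀ k, v k (σ k) ≠ 0)
    (hs : ∀ k, v k ∈ FF m ((σ k : ℕ) + 1)) (i : ℕ) :
    span ℂ (Set.range v) ⊓ FF m i = span ℂ (v '' {k | (σ k : ℕ) < i}) := by
  apply le_antisymm
  · rintro x ⟨hx1, hx2⟩
    obtain ⟨c, rfl⟩ := (mem_span_range_iff_exists_fun ℂ).1 hx1
    have hzero : ∀ k, i ≤ (σ k : ℕ) → c k = 0 := by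
      intro k hk
      by_contra hck
      obtain ⟨k₀, h1, h2, h4⟩ := eval_max hinj hp hs c ⟨k, hck⟩
      have hge : i ≤ ((σ k₀ : Fin m) : ℕ) := le_trans hk (by exact_mod_cast h2 k hck)
      have hz := hx2 (σ k₀) hge
      rw [h4] at hz
      exact (mul_ne_zero h1 (hp k₀)) hz
    classical
    have hrw : (∑ k, c k • v k)
        = ∑ k ∈ Finset.univ.filter (fun k => (σ k : ℕ) < i), c k • v k := by
      symm
      apply Finset.sum_subset (Finset.subset_univ _)
      intro k _ hk
      have : i ≤ (σ k : ℕ) := by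
        by_contra hcon
        exact hk (Finset.mem_filter.2 ⟨Finset.mem_univ _, not_le.1 hcon⟩)
      rw [hzero k this, zero_smul]
    rw [hrw]
    apply Submodule.sum_mem
    intro k hk
    exact Submodule.smul_mem _ _ (Submodule.subset_span ⟨k, (Finset.mem_filter.1 hk).2, rfl⟩)
  · apply le_inf
    · exact span_mono (Set.image_subset_range v _)
    · rw [span_le]
      rintro _ ⟨k, hk, rfl⟩
      exact FF_mono hk (hs k)

lemma tri_finrank_top (hinj : Function.Injective σ) (hp : ∀ k, v k (σ k) ≠ 0)
    (hs : ∀ k, v k ∈ GG m (σ k)) (i : ℕ) :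
    finrank ℂ ↥(span ℂ (Set.range v) ⊓ GG m i)
      = (Finset.univ.filter fun k => i ≤ (σ k : ℕ)).card := by
  classical
  rw [tri_span_inf_top hinj hp hs i, Set.image_eq_range]
  rw [show (fun x : {k | i ≤ (σ k : ℕ)} => v ↑x) = v ∘ Subtype.val from rfl]
  rw [finrank_span_eq_card ((tri_indep_top hinj hp hs).comp _ Subtype.val_injective)]
  simp [Fintype.card_subtype]

lemma tri_finrank_bot (hinj : Function.Injective σ) (hp : ∀ k, v k (σ k) ≠ 0)
    (hs : ∀ k, v k ∈ FF m ((σ k : ℕ) + 1)) (i : ℕ) :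
    finrank ℂ ↥(span ℂ (Set.range v) ⊓ FF m i)
      = (Finset.univ.filter fun k => (σ k : ℕ) < i).card := by
  classical
  rw [tri_span_inf_bot hinj hp hs i, Set.image_eq_range]
  rw [show (fun x : {k | (σ k : ℕ) < i} => v ↑x) = v ∘ Subtype.val from rfl]
  rw [finrank_span_eq_card ((tri_indep_bot hinj hp hs).comp _ Subtype.val_injective)]
  simp [Fintype.card_subtype]

lemma tri_finrank_span (hinj : Function.Injective σ) (hp : ∀ k, v k (σ k) ≠ 0)
    (hs : ∀ k, v k ∈ GG m (σ k)) :
    finrank ℂ ↥(span ℂ (Set.range v)) = Fintype.card ι := by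
  exact finrank_span_eq_card (tri_indep_top hinj hp hs)

end TRI
end S15


namespace S15
open Submodule Module Finset
variable {m : ℕ}

lemma eVec_mem_FF {p : Fin m} {i : ℕ} (h : (p:ℕ) < i) : eVec m p ∈ FF m i := by
  intro k hk
  exact eVec_ne (by intro he; subst he; omega)

lemma eVec_mem_GG {p : Fin m} {i : ℕ} (h : i ≤ (p:ℕ)) : eVec m p ∈ GG m i := by
  intro k hk
  exact eVec_ne (by intro he; subst he; omega)

/-- span of the first `j` columns -/
def Wlt {l : ℕ} (g : Mat m l) (j : ℕ) : Submodule ℂ (Fin m → ℂ) :=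
  span ℂ (colV g '' {k : Fin l | (k:ℕ) < j})

lemma Wlt_mono {l : ℕ} (g : Mat m l) {j j' : ℕ} (h : j ≤ j') : Wlt g j ≤ Wlt g j' :=
  span_mono (Set.image_mono (fun k hk => lt_of_lt_of_le hk h))

lemma colV_mem_Wlt {l : ℕ} (g : Mat m l) {j : ℕ} {k : Fin l} (hk : (k:ℕ) < j) :
    colV g k ∈ Wlt g j :=
  subset_span ⟨k, hk, rfl⟩

lemma Wlt_mul_le (g : Mat m m) {p : Mat m m} (hp : ∀ i j : Fin m, j < i → p i j = 0) (j : ℕ) :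
    Wlt (g * p) j ≤ Wlt g j := by
  rw [Wlt, span_le]
  rintro _ ⟨k, hk, rfl⟩
  have hcol : colV (g * p) k = ∑ l, p l k • colV g l := by
    funext i
    simp only [colV, Matrix.mul_apply, Finset.sum_apply, Pi.smul_apply, smul_eq_mul]
    exact Finset.sum_congr rfl fun l _ => mul_comm _ _
  rw [hcol]
  apply Submodule.sum_mem
  intro l _
  rcases le_or_gt l k with h | h
  · exact Submodule.smul_mem _ _ (colV_mem_Wlt g (lt_of_le_of_lt (by exact_mod_cast h) hk))
  · rw [hp l k h, zero_smul]
    exact Submodule.zero_mem _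

lemma Wlt_mul_eq (g : Mat m m) {p : Mat m m} (hp : p ∈ Bp m) (j : ℕ) :
    Wlt (g * p) j = Wlt g j := by
  apply le_antisymm (Wlt_mul_le g hp.2 j)
  have h2 := Wlt_mul_le (g * p) (bp_inv_mem hp).2 j
  rwa [Matrix.mul_assoc, Matrix.mul_nonsing_inv p (bp_isUnit_det hp), Matrix.mul_one] at h2

lemma card_subtype_filter {P Q : Fin m → Prop} [DecidablePred P] [DecidablePred Q] :
    (Finset.univ.filter fun k : {k : Fin m // P k} => Q k.1).card
      = (Finset.univ.filter fun k : Fin m => P k ∧ Q k).card := by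
  apply Finset.card_bij (fun k _ => k.1)
  · intro k hk
    simp only [Finset.mem_filter, Finset.mem_univ, true_and] at hk ⊢
    exact ⟨k.2, hk⟩
  · intro k1 _ k2 _ h
    exact Subtype.ext h
  · intro k hk
    simp only [Finset.mem_filter, Finset.mem_univ, true_and] at hk
    exact ⟨⟨k, hk.1⟩, by simp [hk.2], rfl⟩

lemma Wlt_perm_fact' {b : Mat m m} {w : Equiv.Perm (Fin m)} (j : ℕ) :
    Wlt (b * permMat m w) j = Submodule.map (Matrix.mulVecLin b)
      (span ℂ ((fun k => eVec m (w k)) '' {k : Fin m | (k:ℕ) < j})) := by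
  rw [Wlt, Submodule.map_span]
  congr 1
  have : colV (b * permMat m w) '' {k : Fin m | (k:ℕ) < j}
      = (fun k => Matrix.mulVecLin b (eVec m (w k))) '' {k : Fin m | (k:ℕ) < j} := by
    apply Set.image_congr
    intro k _
    rw [colV_mul_permMat]
    rw [show Matrix.mulVecLin b (eVec m (w k)) = b *ᵥ eVec m (w k) from rfl]
    rw [mulVec_eVec]
  rw [this, Set.image_image]

lemma E1 {g : Mat m m} {y : Equiv.Perm (Fin m)} (hg : g ∈ dcPlus (permMat m y)) (j i : ℕ) :
    finrank ℂ ↥(Wlt g j ⊓ FF m i)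
      = (Finset.univ.filter fun k : Fin m => (k:ℕ) < j ∧ ((y k):ℕ) < i).card := by
  classical
  obtain ⟨b, hb, b', hb', rfl⟩ := hg
  rw [Wlt_mul_eq _ hb' j, Wlt_perm_fact' j, finrank_map_inf_FF hb]
  rw [Set.image_eq_range]
  rw [show (fun x : {k : Fin m | (k:ℕ) < j} => eVec m (y ↑x))
      = (fun x : {k : Fin m // (k:ℕ) < j} => eVec m (y x.1)) from rfl]
  rw [tri_finrank_bot (σ := fun x : {k : Fin m // (k:ℕ) < j} => y x.1)
    (fun a b hab => Subtype.ext (y.injective hab))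
    (fun k => by simp [eVec_self])
    (fun k => eVec_mem_FF (Nat.lt_succ_self _)) i]
  exact card_subtype_filter (P := fun k => (k:ℕ) < j) (Q := fun k => ((y k):ℕ) < i)

lemma E2 {g b : Mat m m} {z : Equiv.Perm (Fin m)} (hb : b ∈ Bm m)
    (hg : g = b * permMat m z) (j i : ℕ) :
    finrank ℂ ↥(Wlt g j ⊓ GG m i)
      = (Finset.univ.filter fun k : Fin m => (k:ℕ) < j ∧ i ≤ ((z k):ℕ)).card := by
  classical
  subst hg
  rw [Wlt_perm_fact' j, finrank_map_inf_GG hb]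
  rw [Set.image_eq_range]
  rw [show (fun x : {k : Fin m | (k:ℕ) < j} => eVec m (z ↑x))
      = (fun x : {k : Fin m // (k:ℕ) < j} => eVec m (z x.1)) from rfl]
  rw [tri_finrank_top (σ := fun x : {k : Fin m // (k:ℕ) < j} => z x.1)
    (fun a b hab => Subtype.ext (z.injective hab))
    (fun k => by simp [eVec_self])
    (fun k => eVec_mem_GG (le_refl _)) i]
  exact card_subtype_filter (P := fun k => (k:ℕ) < j) (Q := fun k => i ≤ ((z k):ℕ))

end S15


namespace S15
open Submodule Module Finset
variable {m : ℕ}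

lemma card_val_lt {j : ℕ} (h : j ≤ m) :
    (Finset.univ.filter fun k : Fin m => (k:ℕ) < j).card = j := by
  classical
  have : (Finset.univ.filter fun k : Fin m => (k:ℕ) < j) =
      (Finset.univ : Finset (Fin j)).map ⟨fun (k : Fin j) => (⟨(k:ℕ), lt_of_lt_of_le k.isLt h⟩ : Fin m),
        by intro a b hab; simpa [Fin.ext_iff] using hab⟩ := by
    ext k
    simp only [Finset.mem_filter, Finset.mem_univ, true_and, Finset.mem_map,
      Function.Embedding.coeFn_mk]
    constructor
    · intro hk; exact ⟨⟨(k:ℕ), hk⟩, by apply Fin.ext; rfl⟩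
    · rintro ⟨i, _, rfl⟩; exact i.isLt
  rw [this, Finset.card_map, Finset.card_univ, Fintype.card_fin]

lemma card_filter_and_add {P Q : Fin m → Prop} [DecidablePred P] [DecidablePred Q] :
    (Finset.univ.filter fun k => P k ∧ Q k).card
      + (Finset.univ.filter fun k => P k ∧ ¬ Q k).card
      = (Finset.univ.filter P).card := by
  rw [show (Finset.univ.filter fun k => P k ∧ Q k) = (Finset.univ.filter P).filter Q by
      rw [Finset.filter_filter],
    show (Finset.univ.filter fun k => P k ∧ ¬ Q k)
        = (Finset.univ.filter P).filter (fun k => ¬ Q k) by rw [Finset.filter_filter]]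
  exact Finset.card_filter_add_card_filter_not _

lemma card_image_Iic_filter (y : Equiv.Perm (Fin m)) (p i : Fin m) :
    (((Finset.Iic p).image y).filter (· ≤ i)).card
      = (Finset.univ.filter fun k : Fin m => (k:ℕ) < (p:ℕ)+1 ∧ ((y k):ℕ) < (i:ℕ)+1).card := by
  classical
  rw [Finset.filter_image, Finset.card_image_of_injective _ y.injective]
  congr 1
  ext k
  simp only [Finset.mem_filter, Finset.mem_Iic, Finset.mem_univ, true_and]
  rw [Fin.le_def, Fin.le_def]
  omega

/-- comparing sorted enumerations via counting -/
lemma finsetLE_of_card {A B : Finset (Fin m)} (hcard : A.card = B.card)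
    (h : ∀ i : Fin m, (B.filter (· ≤ i)).card ≤ (A.filter (· ≤ i)).card) :
    finsetLE A B := by
  classical
  rw [finsetLE, List.forall₂_iff_get]
  have hlen : (A.sort (· ≤ ·)).length = (B.sort (· ≤ ·)).length := by
    simp [hcard]
  refine ⟨hlen, ?_⟩
  intro l h1 h2
  set LA := A.sort (· ≤ ·)
  set LB := B.sort (· ≤ ·)
  set x := LB.get ⟨l, h2⟩ with hx
  have hsortA : LA.Pairwise (· ≤ ·) := Finset.pairwise_sort _ _
  have hsortB : LB.Pairwise (· ≤ ·) := Finset.pairwise_sort _ _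
  have hc1 : l + 1 ≤ (B.filter (· ≤ x)).card := by
    have himg : ((Finset.univ : Finset (Fin (l+1))).image
        (fun (i : Fin (l+1)) => LB.get ⟨(i:ℕ), lt_of_le_of_lt (Nat.lt_succ_iff.mp i.isLt) h2⟩))
          ⊆ B.filter (· ≤ x) := by
      intro b hb
      simp only [Finset.mem_image, Finset.mem_univ, true_and] at hb
      obtain ⟨i, rfl⟩ := hb
      refine Finset.mem_filter.2 ⟨?_, ?_⟩
      · exact (Finset.mem_sort (α := Fin m) (r := (· ≤ ·))).1 (List.get_mem _ _)
      · exact hsortB.rel_get_of_le (by exact Fin.mk_le_mk.2 (Nat.lt_succ_iff.mp i.isLt))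
    have hinj : ((Finset.univ : Finset (Fin (l+1))).image
        (fun (i : Fin (l+1)) => LB.get ⟨(i:ℕ), lt_of_le_of_lt (Nat.lt_succ_iff.mp i.isLt) h2⟩)).card = l+1 := by
      rw [Finset.card_image_of_injective, Finset.card_univ, Fintype.card_fin]
      intro i1 i2 hi
      have hnd := Finset.sort_nodup B (· ≤ ·)
      have h5 := List.nodup_iff_injective_get.1 hnd hi
      exact Fin.ext (by simpa [Fin.ext_iff] using h5)
    calc l + 1 = _ := hinj.symm
      _ ≤ (B.filter (· ≤ x)).card := Finset.card_le_card himg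
  have hc2 : l + 1 ≤ (A.filter (· ≤ x)).card := le_trans hc1 (h x)
  by_contra hlt
  push_neg at hlt
  have hc3 : (A.filter (· ≤ x)).card ≤ l := by
    have := Finset.card_le_card_of_injOn (s := A.filter (· ≤ x)) (f := fun a => LA.idxOf a)
      (t := Finset.range l) ?_ ?_
    · simpa using this
    · intro a ha
      simp only [Finset.mem_coe, Finset.mem_filter] at ha ⊢
      have hmem : a ∈ LA := (Finset.mem_sort (α := Fin m) (r := (· ≤ ·))).2 ha.1
      have hidx : LA.idxOf a < LA.length := List.idxOf_lt_length_iff.2 hmem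
      rw [Finset.mem_range]
      by_contra hge
      push_neg at hge
      have hget : LA.get ⟨LA.idxOf a, hidx⟩ = a := List.idxOf_get _
      have : LA.get ⟨l, h1⟩ ≤ a := by
        rw [← hget]
        exact hsortA.rel_get_of_le (by exact Fin.mk_le_mk.2 hge)
      exact absurd (lt_of_le_of_lt (le_trans this ha.2) hlt) (lt_irrefl _)
    · intro a ha b hb hab
      simp only [Finset.coe_filter, Set.mem_setOf_eq] at ha hb
      have ha' : a ∈ LA := (Finset.mem_sort (α := Fin m) (r := (· ≤ ·))).2 ha.1
      have hb' : b ∈ LA := (Finset.mem_sort (α := Fin m) (r := (· ≤ ·))).2 hb.1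
      have h1a := List.idxOf_get (a := a) (l := LA) (List.idxOf_lt_length_iff.2 ha')
      have h1b := List.idxOf_get (a := b) (l := LA) (List.idxOf_lt_length_iff.2 hb')
      rw [← h1a, ← h1b]
      congr 1
      exact Fin.ext hab
  omega

end S15


namespace S15
open Submodule Module Finset
variable {m : ℕ}

lemma finrank_Wlt {g : Mat m m} {y : Equiv.Perm (Fin m)} (hg : g ∈ dcPlus (permMat m y))
    (j : ℕ) : finrank ℂ ↥(Wlt g j) = (Finset.univ.filter fun k : Fin m => (k:ℕ) < j).card := by
  classical
  have h := E1 hg j m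
  rw [FF_top (le_refl m), inf_top_eq] at h
  rw [h]
  congr 1
  ext k
  simp only [Finset.mem_filter, Finset.mem_univ, true_and, and_iff_left_iff_imp]
  exact fun _ => (y k).isLt

lemma bruhat_of {g b : Mat m m} {y z : Equiv.Perm (Fin m)}
    (hgy : g ∈ dcPlus (permMat m y)) (hb : b ∈ Bm m) (hg : g = b * permMat m z) :
    bruhatLE z y := by
  classical
  intro p
  apply finsetLE_of_card
  · rw [Finset.card_image_of_injective _ z.injective,
      Finset.card_image_of_injective _ y.injective]
  · intro i
    rw [card_image_Iic_filter y p i, card_image_Iic_filter z p i]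
    have hy := E1 hgy ((p:ℕ)+1) ((i:ℕ)+1)
    have hz := E2 hb hg ((p:ℕ)+1) ((i:ℕ)+1)
    have hW : finrank ℂ ↥(Wlt g ((p:ℕ)+1)) = (p:ℕ)+1 := by
      rw [finrank_Wlt hgy, card_val_lt (by omega)]
    set X := Wlt g ((p:ℕ)+1) ⊓ FF m ((i:ℕ)+1)
    set Y := Wlt g ((p:ℕ)+1) ⊓ GG m ((i:ℕ)+1)
    have hXY : X ⊓ Y = ⊥ := by
      rw [eq_bot_iff]
      rintro v ⟨⟨-, h1⟩, ⟨-, h2⟩⟩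
      exact (FF_inf_GG (m := m) (i := (i:ℕ)+1)).le ⟨h1, h2⟩
    have hsum : finrank ℂ ↥X + finrank ℂ ↥Y ≤ (p:ℕ)+1 := by
      have := Submodule.finrank_sup_add_finrank_inf_eq X Y
      rw [hXY, finrank_bot] at this
      have hle : finrank ℂ ↥(X ⊔ Y) ≤ (p:ℕ)+1 := by
        rw [← hW]
        exact Submodule.finrank_mono (sup_le inf_le_left inf_le_left)
      omega
    have hcnt : (Finset.univ.filter fun k : Fin m => (k:ℕ) < (p:ℕ)+1 ∧ ((z k):ℕ) < (i:ℕ)+1).card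
        + (Finset.univ.filter fun k : Fin m => (k:ℕ) < (p:ℕ)+1 ∧ (i:ℕ)+1 ≤ ((z k):ℕ)).card
        = (p:ℕ)+1 := by
      have h1 := card_filter_and_add (P := fun k : Fin m => (k:ℕ) < (p:ℕ)+1)
        (Q := fun k : Fin m => ((z k):ℕ) < (i:ℕ)+1)
      have h2 : (Finset.univ.filter fun k : Fin m =>
            (k:ℕ) < (p:ℕ)+1 ∧ ¬ ((z k):ℕ) < (i:ℕ)+1)
          = (Finset.univ.filter fun k : Fin m => (k:ℕ) < (p:ℕ)+1 ∧ (i:ℕ)+1 ≤ ((z k):ℕ)) := by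
        apply Finset.filter_congr
        intro k _
        constructor
        · rintro ⟨ha, hb⟩; exact ⟨ha, not_lt.1 hb⟩
        · rintro ⟨ha, hb⟩; exact ⟨ha, not_lt.2 hb⟩
      rw [h2] at h1
      rw [h1, card_val_lt (by omega)]
    omega

/-- extremal top pivot for a one-step extension -/
lemma pivot_top {X X' : Submodule ℂ (Fin m → ℂ)} (hle : X ≤ X') (hne : ¬ X' ≤ X) :
    ∃ (n : Fin m) (w : Fin m → ℂ), w ∈ X' ∧ w ∉ X ∧ w ∈ GG m (n:ℕ) ∧ w n ≠ 0 ∧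
      ∀ v ∈ X, v ∈ GG m (n:ℕ) → v n = 0 := by
  classical
  set P : ℕ → Prop := fun n => ∃ w, w ∈ X' ∧ w ∉ X ∧ w ∈ GG m n with hP
  obtain ⟨w₀, hw₀X', hw₀X⟩ := SetLike.not_le_iff_exists.1 hne
  have hP0 : P 0 := ⟨w₀, hw₀X', hw₀X, by rw [GG_zero]; trivial⟩
  set n₀ := Nat.findGreatest P m with hn₀
  have hPn₀ : P n₀ := Nat.findGreatest_spec (Nat.zero_le m) hP0
  obtain ⟨w, hwX', hwX, hwG⟩ := hPn₀
  have hn₀le : n₀ ≤ m := Nat.findGreatest_le m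
  have hn₀lt : n₀ < m := by
    rcases lt_or_eq_of_le hn₀le with h | h
    · exact h
    · exfalso
      rw [h] at hwG
      rw [GG_bot (le_refl m)] at hwG
      exact hwX (by rw [(Submodule.mem_bot ℂ).1 hwG]; exact X.zero_mem)
  have hkey : ∀ w', w' ∈ X' → w' ∉ X → w' ∈ GG m n₀ → w' ⟨n₀, hn₀lt⟩ ≠ 0 := by
    intro w' h1 h2 h3 h0
    have hnext : P (n₀ + 1) := by
      refine ⟨w', h1, h2, fun k hk => ?_⟩
      rcases lt_or_eq_of_le (Nat.lt_succ_iff.1 hk) with h | h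
      · exact h3 k h
      · have : k = ⟨n₀, hn₀lt⟩ := Fin.ext h
        rw [this]; exact h0
    exact Nat.findGreatest_is_greatest (Nat.lt_succ_self n₀) (by omega) hnext
  refine ⟨⟨n₀, hn₀lt⟩, w, hwX', hwX, hwG, hkey w hwX' hwX hwG, ?_⟩
  intro v hvX hvG
  by_contra hvn
  have hwn := hkey w hwX' hwX hwG
  set c := w ⟨n₀, hn₀lt⟩ / v ⟨n₀, hn₀lt⟩ with hc
  have h1 : w - c • v ∈ X' := Submodule.sub_mem _ hwX' (hle (Submodule.smul_mem _ _ hvX))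
  have h2 : w - c • v ∉ X := by
    intro hmem
    apply hwX
    have : w = (w - c • v) + c • v := by ring_nf
    rw [this]
    exact Submodule.add_mem _ hmem (Submodule.smul_mem _ _ hvX)
  have h3 : w - c • v ∈ GG m n₀ := Submodule.sub_mem _ hwG (Submodule.smul_mem _ _ hvG)
  have h4 : (w - c • v) ⟨n₀, hn₀lt⟩ = 0 := by
    simp only [Pi.sub_apply, Pi.smul_apply, smul_eq_mul, hc]
    field_simp
    ring
  exact hkey _ h1 h2 h3 h4

/-- extremal bottom pivot for a one-step extension -/
lemma pivot_bot {X X' : Submodule ℂ (Fin m → ℂ)} (hle : X ≤ X') (hne : ¬ X' ≤ X) :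
    ∃ (n : Fin m) (w : Fin m → ℂ), w ∈ X' ∧ w ∉ X ∧ w ∈ FF m ((n:ℕ)+1) ∧ w n ≠ 0 ∧
      ∀ v ∈ X, v ∈ FF m ((n:ℕ)+1) → v n = 0 := by
  classical
  set P : ℕ → Prop := fun n => ∃ w, w ∈ X' ∧ w ∉ X ∧ w ∈ FF m n with hP
  obtain ⟨w₀, hw₀X', hw₀X⟩ := SetLike.not_le_iff_exists.1 hne
  have hPm : P m := ⟨w₀, hw₀X', hw₀X, by rw [FF_top (le_refl m)]; trivial⟩
  have hex : ∃ n, P n := ⟨m, hPm⟩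
  set n₀ := Nat.find hex with hn₀
  have hPn₀ : P n₀ := Nat.find_spec hex
  obtain ⟨w, hwX', hwX, hwF⟩ := hPn₀
  have hn₀le : n₀ ≤ m := Nat.find_le hPm
  have hn₀pos : 0 < n₀ := by
    rcases Nat.eq_zero_or_pos n₀ with h | h
    · exfalso
      rw [h, FF_zero] at hwF
      exact hwX (by rw [(Submodule.mem_bot ℂ).1 hwF]; exact X.zero_mem)
    · exact h
  have hn₁lt : n₀ - 1 < m := by omega
  have hFFeq : ((⟨n₀ - 1, hn₁lt⟩ : Fin m) : ℕ) + 1 = n₀ := by simp; omega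
  have hkey : ∀ w', w' ∈ X' → w' ∉ X → w' ∈ FF m n₀ → w' ⟨n₀ - 1, hn₁lt⟩ ≠ 0 := by
    intro w' h1 h2 h3 h0
    have hprev : P (n₀ - 1) := by
      refine ⟨w', h1, h2, fun k hk => ?_⟩
      rcases lt_or_eq_of_le hk with h | h
      · exact h3 k (by omega)
      · have : k = ⟨n₀ - 1, hn₁lt⟩ := Fin.ext h.symm
        rw [this]; exact h0
    exact Nat.find_min hex (by omega) hprev
  refine ⟨⟨n₀ - 1, hn₁lt⟩, w, hwX', hwX, by rw [hFFeq]; exact hwF,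
    hkey w hwX' hwX hwF, ?_⟩
  intro v hvX hvF
  rw [hFFeq] at hvF
  by_contra hvn
  set c := w ⟨n₀ - 1, hn₁lt⟩ / v ⟨n₀ - 1, hn₁lt⟩ with hc
  have h1 : w - c • v ∈ X' := Submodule.sub_mem _ hwX' (hle (Submodule.smul_mem _ _ hvX))
  have h2 : w - c • v ∉ X := by
    intro hmem
    apply hwX
    have : w = (w - c • v) + c • v := by ring_nf
    rw [this]
    exact Submodule.add_mem _ hmem (Submodule.smul_mem _ _ hvX)
  have h3 : w - c • v ∈ FF m n₀ := Submodule.sub_mem _ hwF (Submodule.smul_mem _ _ hvF)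
  have h4 : (w - c • v) ⟨n₀ - 1, hn₁lt⟩ = 0 := by
    simp only [Pi.sub_apply, Pi.smul_apply, smul_eq_mul, hc]
    field_simp
    ring
  exact hkey _ h1 h2 h3 h4
end S15


namespace S15
open Submodule Module Finset
variable {m : ℕ}

lemma finrank_span_image {ι : Type*} [Fintype ι] {v : ι → Fin m → ℂ}
    (hv : LinearIndependent ℂ v) (s : Set ι) [DecidablePred (· ∈ s)] :
    finrank ℂ ↥(span ℂ (v '' s)) = (Finset.univ.filter (· ∈ s)).card := by
  rw [Set.image_eq_range, show (fun x : s => v ↑x) = v ∘ Subtype.val from rfl,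
    finrank_span_eq_card (hv.comp _ Subtype.val_injective)]
  simp [Fintype.card_subtype]

lemma mul_apply_colV {M N : Mat m m} (i j : Fin m) : (M * N) i j = (M *ᵥ colV N j) i := by
  simp [Matrix.mul_apply, Matrix.mulVec, dotProduct, colV]

lemma mulVec_eq_sum_colV (M : Mat m m) (v : Fin m → ℂ) :
    M *ᵥ v = ∑ k, v k • colV M k := by
  funext i
  simp only [Matrix.mulVec, dotProduct, Finset.sum_apply, Pi.smul_apply, smul_eq_mul, colV]
  exact Finset.sum_congr rfl fun k _ => mul_comm _ _

section Construction

variable {t : ℕ} (ht : t ≤ m) (r : Fin t → Fin m) (hr : StrictMono r)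
variable (a : Mat m t) (ha : a ∈ Cmr m t r)

lemma forward (ht : t ≤ m) (r : Fin t → Fin m) (hr : StrictMono r)
    (a : Mat m t) (ha : a ∈ Cmr m t r) :
    ∃ y z : Equiv.Perm (Fin m),
      tailMono t y ∧ headMono t z ∧ bruhatLE z y ∧
      (∀ j : Fin t, z (Fin.castLE ht j) = r j) ∧ a ∈ Cset m t y z := by
  classical
  obtain ⟨hapiv, hazero⟩ := ha
  -- columns of a
  have hacol_GG : ∀ j : Fin t, colV a j ∈ GG m (r j) := by
    intro j k hk
    exact hazero k j (by exact_mod_cast hk)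
  have hacol_ne : ∀ j : Fin t, colV a j (r j) ≠ 0 := fun j => hapiv j
  have hacol_indep : LinearIndependent ℂ (colV a) :=
    tri_indep_top hr.injective hacol_ne hacol_GG
  -- bottom pivots of the column filtration of a
  have hdw : ∀ j : Fin t, ∃ (n : Fin m) (w : Fin m → ℂ),
      w ∈ Wlt a ((j:ℕ)+1) ∧ w ∉ Wlt a (j:ℕ) ∧ w ∈ FF m ((n:ℕ)+1) ∧ w n ≠ 0 ∧
      ∀ v ∈ Wlt a (j:ℕ), v ∈ FF m ((n:ℕ)+1) → v n = 0 := by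
    intro j
    apply pivot_bot (Wlt_mono a (Nat.le_succ _))
    intro hcon
    exact hacol_indep.notMem_span_image (by simp)
      (hcon (colV_mem_Wlt a (Nat.lt_succ_self _)))
  choose d ab hab1 hab2 hab3 hab4 hab5 using hdw
  have hd_inj : Function.Injective d := by
    have key : ∀ j k : Fin t, j < k → d j ≠ d k := by
      intro j k hjk he
      have h1 : ab j ∈ Wlt a (k:ℕ) := Wlt_mono a (by omega) (hab1 j)
      have h2 : ab j ∈ FF m ((d k : ℕ)+1) := he ▸ hab3 j
      have := hab5 k (ab j) h1 h2
      rw [← he] at this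
      exact hab4 j this
    intro j k he
    by_contra hne
    rcases lt_or_gt_of_ne hne with h | h
    · exact key j k h he
    · exact key k j h he.symm
  -- enumeration of the complement of the pivot set
  set dSet : Finset (Fin m) := Finset.image d Finset.univ with hdSet
  have hdSet_card : dSet.card = t := by
    rw [hdSet, Finset.card_image_of_injective _ hd_inj, Finset.card_univ, Fintype.card_fin]
  have hcomp_card : dSetᶜ.card = m - t := by
    rw [Finset.card_compl, hdSet_card, Fintype.card_fin]
  set cIso := dSetᶜ.orderIsoOfFin hcomp_card with hcIso
  set c : Fin (m - t) → Fin m := fun s => (cIso s : Fin m) with hc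
  have hc_strict : StrictMono c := by
    intro s1 s2 hs
    exact (Subtype.coe_lt_coe).2 (cIso.strictMono hs)
  have hc_mem : ∀ s, c s ∉ dSet := by
    intro s
    have := (cIso s).2
    rw [Finset.mem_compl] at this
    exact this
  -- the permutation y
  set yfun : Fin m → Fin m := fun j =>
    if h : (j:ℕ) < t then d ⟨(j:ℕ), h⟩ else c ⟨(j:ℕ) - t, by omega⟩ with hyfun
  have hyfun_inj : Function.Injective yfun := by
    intro j k he
    by_cases hj : (j:ℕ) < t <;> by_cases hk : (k:ℕ) < t
    · rw [hyfun] at he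
      simp only [dif_pos hj, dif_pos hk] at he
      have := hd_inj he
      exact Fin.ext (by simpa [Fin.ext_iff] using this)
    · exfalso
      rw [hyfun] at he
      simp only [dif_pos hj, dif_neg hk] at he
      exact hc_mem _ (he ▸ Finset.mem_image_of_mem d (Finset.mem_univ _))
    · exfalso
      rw [hyfun] at he
      simp only [dif_neg hj, dif_pos hk] at he
      exact hc_mem _ (he.symm ▸ Finset.mem_image_of_mem d (Finset.mem_univ _))
    · rw [hyfun] at he
      simp only [dif_neg hj, dif_neg hk] at he
      have := hc_strict.injective he
      have : (j:ℕ) - t = (k:ℕ) - t := by simpa [Fin.ext_iff] using this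
      exact Fin.ext (by omega)
  set y : Equiv.Perm (Fin m) := Equiv.ofBijective yfun
    ((Finite.injective_iff_bijective).1 hyfun_inj) with hy
  have hy_app : ∀ k, y k = yfun k := fun k => rfl
  -- the triangular family spanning the forced subspaces
  set hh : Fin m → (Fin m → ℂ) := fun k =>
    if h : (k:ℕ) < t then ab ⟨(k:ℕ), h⟩ else eVec m (yfun k) with hhh
  have hhh_FF : ∀ k, hh k ∈ FF m ((yfun k : ℕ) + 1) := by
    intro k
    by_cases h : (k:ℕ) < t
    · rw [hhh]; simp only [dif_pos h]
      rw [hyfun]; simp only [dif_pos h]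
      exact hab3 _
    · rw [hhh]; simp only [dif_neg h]
      exact eVec_mem_FF (Nat.lt_succ_self _)
  have hhh_ne : ∀ k, hh k (yfun k) ≠ 0 := by
    intro k
    by_cases h : (k:ℕ) < t
    · rw [hhh]; simp only [dif_pos h]
      rw [hyfun]; simp only [dif_pos h]
      exact hab4 _
    · rw [hhh]; simp only [dif_neg h]
      rw [eVec_self]; exact one_ne_zero
  have hhh_indep : LinearIndependent ℂ hh := tri_indep_bot hyfun_inj hhh_ne hhh_FF
  set Uspan : ℕ → Submodule ℂ (Fin m → ℂ) :=
    fun j => span ℂ (hh '' {k : Fin m | (k:ℕ) < j}) with hUspan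
  have hU_mono : ∀ {j j' : ℕ}, j ≤ j' → Uspan j ≤ Uspan j' := by
    intro j j' hj
    exact span_mono (Set.image_mono (fun k hk => lt_of_lt_of_le hk hj))
  have hU_rank : ∀ j : ℕ, j ≤ m → finrank ℂ ↥(Uspan j) = j := by
    intro j hj
    rw [hUspan]
    rw [finrank_span_image hhh_indep {k : Fin m | (k:ℕ) < j}]
    exact card_val_lt hj
  have hWa_rank : ∀ j : ℕ, j ≤ t → finrank ℂ ↥(Wlt a j) = j := by
    intro j hj
    rw [Wlt, finrank_span_image hacol_indep {k : Fin t | (k:ℕ) < j}]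
    exact card_val_lt (m := t) hj
  -- prefix spans agree with the column spans of a
  have hSP : ∀ j : ℕ, j ≤ t → Uspan j = Wlt a j := by
    intro j hj
    apply Submodule.eq_of_le_of_finrank_le
    · rw [hUspan, span_le]
      rintro _ ⟨k, hk, rfl⟩
      have hkt : (k:ℕ) < t := lt_of_lt_of_le hk hj
      rw [hhh]; simp only [dif_pos hkt]
      exact Wlt_mono a (Nat.succ_le_of_lt hk) (hab1 ⟨(k:ℕ), hkt⟩)
    · rw [hWa_rank j hj, hU_rank j (le_trans hj ht)]
  -- top pivots of the one-step extensions
  have hzw : ∀ j : Fin m, ∃ (n : Fin m) (w : Fin m → ℂ),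
      w ∈ Uspan ((j:ℕ)+1) ∧ w ∉ Uspan (j:ℕ) ∧ w ∈ GG m (n:ℕ) ∧ w n ≠ 0 ∧
      ∀ v ∈ Uspan (j:ℕ), v ∈ GG m (n:ℕ) → v n = 0 := by
    intro j
    apply pivot_top (hU_mono (Nat.le_succ _))
    intro hcon
    exact hhh_indep.notMem_span_image (by simp)
      (hcon (subset_span ⟨j, Nat.lt_succ_self _, rfl⟩))
  choose zp wv hwv1 hwv2 hwv3 hwv4 hwv5 using hzw
  set zfun : Fin m → Fin m := fun j =>
    if h : (j:ℕ) < t then r ⟨(j:ℕ), h⟩ else zp j with hzfun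
  have hacol_Ut : ∀ k : Fin t, colV a k ∈ Uspan t := by
    intro k
    rw [hSP t (le_refl t)]
    exact colV_mem_Wlt a k.isLt
  have hzp_ne_r : ∀ (j : Fin m) (k : Fin t), t ≤ (j:ℕ) → zp j ≠ r k := by
    intro j k hj he
    have h1 : colV a k ∈ Uspan (j:ℕ) := hU_mono hj (hacol_Ut k)
    have h2 : colV a k ∈ GG m (zp j : ℕ) := he ▸ hacol_GG k
    have := hwv5 j (colV a k) h1 h2
    rw [he] at this
    exact hacol_ne k this
  have hzp_inj : ∀ j j' : Fin m, j < j' → zp j ≠ zp j' := by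
    intro j j' hjj he
    have h1 : wv j ∈ Uspan (j':ℕ) := hU_mono (by omega) (hwv1 j)
    have h2 : wv j ∈ GG m (zp j' : ℕ) := he ▸ hwv3 j
    have := hwv5 j' (wv j) h1 h2
    rw [← he] at this
    exact hwv4 j this
  have hzfun_inj : Function.Injective zfun := by
    intro j k he
    by_cases hj : (j:ℕ) < t <;> by_cases hk : (k:ℕ) < t
    · rw [hzfun] at he
      simp only [dif_pos hj, dif_pos hk] at he
      have := hr.injective he
      exact Fin.ext (by simpa [Fin.ext_iff] using this)
    · exfalso
      rw [hzfun] at he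
      simp only [dif_pos hj, dif_neg hk] at he
      exact hzp_ne_r k ⟨(j:ℕ), hj⟩ (by omega) he.symm
    · exfalso
      rw [hzfun] at he
      simp only [dif_neg hj, dif_pos hk] at he
      exact hzp_ne_r j ⟨(k:ℕ), hk⟩ (by omega) he
    · rw [hzfun] at he
      simp only [dif_neg hj, dif_neg hk] at he
      by_contra hne
      rcases lt_or_gt_of_ne hne with h | h
      · exact hzp_inj j k h he
      · exact hzp_inj k j h he.symm
  set z : Equiv.Perm (Fin m) := Equiv.ofBijective zfun
    ((Finite.injective_iff_bijective).1 hzfun_inj) with hz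
  have hz_app : ∀ k, z k = zfun k := fun k => rfl
  -- the completed matrix g
  set g : Mat m m := fun i k => if h : (k:ℕ) < t then a i ⟨(k:ℕ), h⟩ else wv k i with hg
  have hgcol : ∀ k : Fin m,
      colV g k = if h : (k:ℕ) < t then colV a ⟨(k:ℕ), h⟩ else wv k := by
    intro k
    by_cases h : (k:ℕ) < t
    · funext i; rw [hg]; simp only [colV, dif_pos h]
    · funext i; rw [hg]; simp only [colV, dif_neg h]
  have hgcol_GG : ∀ k : Fin m, colV g k ∈ GG m (zfun k : ℕ) := by
    intro k
    rw [hgcol k, hzfun]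
    by_cases h : (k:ℕ) < t
    · simp only [dif_pos h]
      exact hacol_GG _
    · simp only [dif_neg h]
      exact hwv3 k
  have hgcol_ne : ∀ k : Fin m, colV g k (zfun k) ≠ 0 := by
    intro k
    rw [hgcol k, hzfun]
    by_cases h : (k:ℕ) < t
    · simp only [dif_pos h]
      exact hacol_ne _
    · simp only [dif_neg h]
      exact hwv4 k
  have hgcol_indep : LinearIndependent ℂ (colV g) :=
    tri_indep_top hzfun_inj hgcol_ne hgcol_GG
  -- span of the first j columns of g is the forced subspace
  have hWgU : ∀ j : ℕ, j ≤ m → Wlt g j = Uspan j := by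
    intro j hj
    apply Submodule.eq_of_le_of_finrank_le
    · rw [Wlt, span_le]
      rintro _ ⟨k, hk, rfl⟩
      rw [hgcol k]
      by_cases h : (k:ℕ) < t
      · simp only [dif_pos h]
        have h1 : colV a ⟨(k:ℕ), h⟩ ∈ Wlt a ((k:ℕ)+1) :=
          colV_mem_Wlt a (Nat.lt_succ_self _)
        have h2 : Wlt a ((k:ℕ)+1) = Uspan ((k:ℕ)+1) := (hSP _ (by omega)).symm
        exact hU_mono (Nat.succ_le_of_lt hk) (h2 ▸ h1)
      · simp only [dif_neg h]
        exact hU_mono (Nat.succ_le_of_lt hk) (hwv1 k)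
    · rw [hU_rank j hj, Wlt, finrank_span_image hgcol_indep {k : Fin m | (k:ℕ) < j}]
      exact le_of_eq (card_val_lt hj).symm
  -- the upper triangular matrix u
  set u : Mat m m := fun i i' =>
    if h : ((y.symm i' : Fin m) : ℕ) < t then ab ⟨((y.symm i' : Fin m) : ℕ), h⟩ i
    else eVec m i' i with hu
  have hucol_y : ∀ k : Fin m, colV u (yfun k) = hh k := by
    intro k
    have hsymm : y.symm (yfun k) = k := by
      rw [← hy_app k]; exact y.symm_apply_apply k
    funext i
    rw [hu, hhh]
    simp only [colV, hsymm]
    by_cases h : (k:ℕ) < t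
    · simp only [dif_pos h]
    · simp only [dif_neg h]
  have hu_upper : ∀ i i' : Fin m, i' < i → u i i' = 0 := by
    intro i i' hii
    rw [hu]
    by_cases h : ((y.symm i' : Fin m) : ℕ) < t
    · simp only [dif_pos h]
      have hd_eq : d ⟨((y.symm i' : Fin m) : ℕ), h⟩ = i' := by
        have := hy_app (y.symm i')
        rw [Equiv.apply_symm_apply] at this
        rw [hyfun] at this
        simp only [dif_pos h] at this
        exact this.symm
      apply hab3 ⟨((y.symm i' : Fin m) : ℕ), h⟩ i
      rw [hd_eq]
      omega
    · simp only [dif_neg h]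
      exact eVec_ne (by intro he; subst he; exact absurd hii (lt_irrefl _))
  have hu_diag : ∀ i : Fin m, u i i ≠ 0 := by
    intro i
    rw [hu]
    by_cases h : ((y.symm i : Fin m) : ℕ) < t
    · simp only [dif_pos h]
      have hd_eq : d ⟨((y.symm i : Fin m) : ℕ), h⟩ = i := by
        have := hy_app (y.symm i)
        rw [Equiv.apply_symm_apply] at this
        rw [hyfun] at this
        simp only [dif_pos h] at this
        exact this.symm
      have hnz := hab4 ⟨((y.symm i : Fin m) : ℕ), h⟩
      rwa [hd_eq] at hnz
    · simp only [dif_neg h]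
      rw [eVec_self]
      exact one_ne_zero
  have hu_unit : IsUnit u := by
    rw [Matrix.isUnit_iff_isUnit_det,
      Matrix.det_of_upperTriangular (fun i j (hij : id j < id i) => hu_upper i j hij),
      isUnit_iff_ne_zero]
    exact Finset.prod_ne_zero_iff.2 fun i _ => hu_diag i
  have hu_Bp : u ∈ Bp m := ⟨hu_unit, hu_upper⟩
  have hudet : IsUnit u.det := (Matrix.isUnit_iff_isUnit_det u).1 hu_unit
  -- Uspan as image of coordinate spans under u
  have hU_map : ∀ j : ℕ,
      Uspan j = Submodule.map (Matrix.mulVecLin u)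
        (span ℂ (eVec m '' (yfun '' {k : Fin m | (k:ℕ) < j}))) := by
    intro j
    rw [Submodule.map_span,
      show Uspan j = span ℂ (hh '' {k : Fin m | (k:ℕ) < j}) from rfl]
    congr 1
    rw [Set.image_image, Set.image_image]
    apply Set.image_congr
    intro k _
    rw [show (Matrix.mulVecLin u) (eVec m (yfun k)) = u *ᵥ eVec m (yfun k) from rfl,
      mulVec_eVec, hucol_y]
  -- g is invertible
  have hg_unit : IsUnit g := by
    rw [Matrix.isUnit_iff_isUnit_det, isUnit_iff_ne_zero]
    intro hdet
    obtain ⟨v, hvne, hv0⟩ := (Matrix.exists_mulVec_eq_zero_iff).2 hdet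
    rw [mulVec_eq_sum_colV] at hv0
    apply hvne
    funext k
    exact (Fintype.linearIndependent_iff.1 hgcol_indep) v hv0 k
  -- the right upper-triangular factor
  set u' : Mat m m := permMat m y⁻¹ * (u⁻¹ * g) with hu'
  have hYY' : permMat m y * permMat m y⁻¹ = 1 := by
    rw [permMat_mul_permMat]
    have : y * y⁻¹ = 1 := by group
    rw [this, permMat_one]
  have hY'Y : permMat m y⁻¹ * permMat m y = 1 := by
    rw [permMat_mul_permMat]
    have : y⁻¹ * y = 1 := by group
    rw [this, permMat_one]
  have hfact : u * permMat m y * u' = g := by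
    rw [hu', Matrix.mul_assoc u (permMat m y), ← Matrix.mul_assoc (permMat m y), hYY',
      Matrix.one_mul, ← Matrix.mul_assoc, Matrix.mul_nonsing_inv u hudet, Matrix.one_mul]
  have hu'_entry : ∀ k j : Fin m, u' k j = (u⁻¹ *ᵥ colV g j) (y k) := by
    intro k j
    rw [hu', permMat_mul (u⁻¹ * g) y⁻¹ k j]
    have hyy : (y⁻¹)⁻¹ = y := by group
    rw [hyy, mul_apply_colV]
  have hu'_upper : ∀ k j : Fin m, j < k → u' k j = 0 := by
    intro k j hjk
    rw [hu'_entry k j]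
    have hcolU : colV g j ∈ Submodule.map (Matrix.mulVecLin u)
        (span ℂ (eVec m '' (yfun '' {k' : Fin m | (k':ℕ) < (j:ℕ)+1}))) := by
      rw [← hU_map ((j:ℕ)+1), ← hWgU ((j:ℕ)+1) (by omega)]
      exact colV_mem_Wlt g (Nat.lt_succ_self _)
    obtain ⟨x, hx, hxe⟩ := hcolU
    have hxg : u⁻¹ *ᵥ colV g j = x := by
      rw [← hxe, show (Matrix.mulVecLin u) x = u *ᵥ x from rfl, isUnit_mulVec_cancel' hu_unit]
    rw [hxg]
    apply span_eVec_le _ x hx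
    rintro ⟨k', hk', he⟩
    have : k' = k := hyfun_inj (by rw [he, ← hy_app k])
    subst this
    simp only [Set.mem_setOf_eq] at hk'
    omega
  have hu'_unit : IsUnit u' := by
    rw [hu']
    have h1 : IsUnit (u⁻¹) :=
      ⟨⟨u⁻¹, u, Matrix.nonsing_inv_mul u hudet, Matrix.mul_nonsing_inv u hudet⟩, rfl⟩
    exact (isUnit_permMat y⁻¹).mul (h1.mul hg_unit)
  have hg_dcPlus : g ∈ dcPlus (permMat m y) :=
    ⟨u, hu_Bp, u', ⟨hu'_unit, hu'_upper⟩, hfact.symm⟩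
  -- the lower triangular factor
  set b : Mat m m := g * permMat m z⁻¹ with hb
  have hZZ' : permMat m z⁻¹ * permMat m z = 1 := by
    rw [permMat_mul_permMat]
    have : z⁻¹ * z = 1 := by group
    rw [this, permMat_one]
  have hbz : g = b * permMat m z := by
    rw [hb, Matrix.mul_assoc, hZZ', Matrix.mul_one]
  have hb_lower : ∀ i i' : Fin m, i < i' → b i i' = 0 := by
    intro i i' hii
    rw [hb, mul_permMat]
    have hz' : zfun (z⁻¹ i') = i' := by
      rw [← hz_app (z⁻¹ i')]
      exact z.apply_symm_apply i'
    have := hgcol_GG (z⁻¹ i') i (by rw [hz']; exact_mod_cast hii)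
    exact this
  have hb_unit : IsUnit b := by
    rw [hb]
    exact hg_unit.mul (isUnit_permMat z⁻¹)
  have hb_Bm : b ∈ Bm m := ⟨hb_unit, hb_lower⟩
  -- a is the truncation of g
  have haI : a = g * Imn m t t := by
    ext i j
    rw [Matrix.mul_apply]
    rw [Finset.sum_eq_single (Fin.castLE ht j)]
    · have h1 : ((Fin.castLE ht j : Fin m) : ℕ) = (j:ℕ) := rfl
      have h2 : Imn m t t (Fin.castLE ht j) j = 1 := by
        rw [Imn, if_pos ⟨h1, by rw [h1]; exact j.isLt⟩]
      rw [h2, mul_one, hg]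
      simp only [dif_pos (show ((Fin.castLE ht j : Fin m) : ℕ) < t from j.isLt)]
      congr 1
    · intro k _ hk
      have : Imn m t t k j = 0 := by
        rw [Imn, if_neg]
        rintro ⟨hv, hlt⟩
        exact hk (Fin.ext hv)
      rw [this, mul_zero]
    · intro hcon
      exact absurd (Finset.mem_univ _) hcon
  -- conclusion
  refine ⟨y, z, ?_, ?_, ?_, ?_, ?_⟩
  · intro i j hij hti
    rw [hy_app, hy_app, hyfun]
    simp only [dif_neg (show ¬ (i:ℕ) < t by omega),
      dif_neg (show ¬ (j:ℕ) < t by omega)]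
    apply hc_strict
    rw [Fin.lt_def]
    simp only [Fin.val_mk]
    have : (i:ℕ) < (j:ℕ) := hij
    omega
  · intro i j hij hjt
    have hit : (i:ℕ) < t := lt_trans (by exact_mod_cast hij) hjt
    rw [hz_app, hz_app, hzfun]
    simp only [dif_pos hit, dif_pos hjt]
    apply hr
    rw [Fin.lt_def]
    simp only [Fin.val_mk]
    exact hij
  · exact bruhat_of hg_dcPlus hb_Bm hbz
  · intro j
    rw [hz_app, hzfun]
    simp only [dif_pos (show ((Fin.castLE ht j : Fin m) : ℕ) < t from j.isLt)]
    congr 1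
  · exact ⟨g, ⟨hg_dcPlus, ⟨b, hb_Bm, hbz⟩⟩, haI⟩

end Construction
end S15


namespace S15
open Submodule Module Finset
variable {m : ℕ}

lemma mul_Imn_apply {t : ℕ} (ht : t ≤ m) (g : Mat m m) (i : Fin m) (j : Fin t) :
    (g * Imn m t t) i j = g i (Fin.castLE ht j) := by
  rw [Matrix.mul_apply]
  rw [Finset.sum_eq_single (Fin.castLE ht j)]
  · have h2 : Imn m t t (Fin.castLE ht j) j = 1 := by
      rw [Imn, if_pos ⟨rfl, j.isLt⟩]
    rw [h2, mul_one]
  · intro k _ hk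
    have : Imn m t t k j = 0 := by
      rw [Imn, if_neg]
      rintro ⟨hv, hlt⟩
      exact hk (Fin.ext hv)
    rw [this, mul_zero]
  · intro hcon
    exact absurd (Finset.mem_univ _) hcon

lemma backward {t : ℕ} (ht : t ≤ m) (r : Fin t → Fin m)
    {y z : Equiv.Perm (Fin m)} (hzr : ∀ j : Fin t, z (Fin.castLE ht j) = r j)
    {a : Mat m t} (haC : a ∈ Cset m t y z) : a ∈ Cmr m t r := by
  obtain ⟨g, ⟨-, ⟨b, hbBm, hgb⟩⟩, haI⟩ := haC
  have hentry : ∀ (i : Fin m) (j : Fin t), a i j = b i (r j) := by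
    intro i j
    rw [haI, mul_Imn_apply ht, hgb, mul_permMat, hzr j]
  constructor
  · intro j
    rw [hentry]
    exact bm_diag_ne hbBm (r j)
  · intro i j hij
    rw [hentry]
    exact hbBm.2 i (r j) hij

lemma Wlt_trunc {t : ℕ} (ht : t ≤ m) {g : Mat m m} {a : Mat m t}
    (haI : a = g * Imn m t t) {j : ℕ} (hj : j ≤ t) : Wlt g j = Wlt a j := by
  have hcol : ∀ (k : Fin m) (hk : (k:ℕ) < t), colV g k = colV a ⟨(k:ℕ), hk⟩ := by
    intro k hk
    funext i
    have : a i ⟨(k:ℕ), hk⟩ = g i (Fin.castLE ht ⟨(k:ℕ), hk⟩) := by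
      rw [haI, mul_Imn_apply ht]
    rw [colV, colV, this]
    congr 1
  apply le_antisymm
  · rw [Wlt, span_le]
    rintro _ ⟨k, hk, rfl⟩
    rw [hcol k (lt_of_lt_of_le hk hj)]
    exact colV_mem_Wlt a (show ((⟨(k:ℕ), lt_of_lt_of_le hk hj⟩ : Fin t) : ℕ) < j from hk)
  · rw [Wlt, span_le]
    rintro _ ⟨k, hk, rfl⟩
    have hkm : (k:ℕ) < m := lt_of_lt_of_le k.isLt ht
    have he := hcol ⟨(k:ℕ), hkm⟩ k.isLt
    have he2 : colV a ⟨((⟨(k:ℕ), hkm⟩ : Fin m) : ℕ), k.isLt⟩ = colV a k := by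
      congr 1
    rw [he2] at he
    rw [← he]
    exact colV_mem_Wlt g (show ((⟨(k:ℕ), hkm⟩ : Fin m) : ℕ) < j from hk)

lemma card_step {j : ℕ} (hj : j < m) {P : Fin m → Prop} [DecidablePred P] :
    (Finset.univ.filter fun k : Fin m => (k:ℕ) < j+1 ∧ P k).card
      = (Finset.univ.filter fun k : Fin m => (k:ℕ) < j ∧ P k).card
        + (if P ⟨j, hj⟩ then 1 else 0) := by
  classical
  have hsplit : (Finset.univ.filter fun k : Fin m => (k:ℕ) < j+1 ∧ P k)
      = (Finset.univ.filter fun k : Fin m => (k:ℕ) < j ∧ P k)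
        ∪ (if P ⟨j, hj⟩ then {⟨j, hj⟩} else ∅) := by
    ext k
    by_cases hP : P ⟨j, hj⟩
    · simp only [Finset.mem_filter, Finset.mem_univ, true_and, if_pos hP,
        Finset.mem_union, Finset.mem_singleton]
      constructor
      · rintro ⟨h1, h2⟩
        rcases Nat.lt_or_ge (k:ℕ) j with h | h
        · exact Or.inl ⟨h, h2⟩
        · exact Or.inr (Fin.ext (show (k:ℕ) = j by omega))
      · rintro (⟨h1, h2⟩ | rfl)
        · exact ⟨by omega, h2⟩
        · exact ⟨Nat.lt_succ_self j, hP⟩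
    · simp only [Finset.mem_filter, Finset.mem_univ, true_and, if_neg hP,
        Finset.mem_union, Finset.notMem_empty, or_false]
      constructor
      · rintro ⟨h1, h2⟩
        have : (k:ℕ) ≠ j := by
          intro he
          exact hP (by rwa [show (⟨j, hj⟩ : Fin m) = k from Fin.ext he.symm])
        exact ⟨by omega, h2⟩
      · rintro ⟨h1, h2⟩
        exact ⟨by omega, h2⟩
  rw [hsplit, Finset.card_union_of_disjoint]
  · congr 1
    split_ifs <;> simp
  · rw [Finset.disjoint_right]
    intro k hk hk2
    split_ifs at hk with hP
    · rw [Finset.mem_singleton] at hk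
      subst hk
      have hcon := (Finset.mem_filter.1 hk2).2.1
      exact absurd (show (j:ℕ) < j from hcon) (lt_irrefl j)
    · exact absurd hk (Finset.notMem_empty _)

lemma val_eq_of_lt_iff {p q : Fin m} (h : ∀ i : ℕ, ((p:ℕ) < i ↔ (q:ℕ) < i)) : p = q := by
  apply Fin.ext
  have h1 := (h ((p:ℕ)+1)).1 (Nat.lt_succ_self _)
  have h2 := (h ((q:ℕ)+1)).2 (Nat.lt_succ_self _)
  omega

lemma perm_tail_eq {t : ℕ} {y y' : Equiv.Perm (Fin m)} (hy : tailMono t y) (hy' : tailMono t y')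
    (hhead : ∀ k : Fin m, (k:ℕ) < t → y k = y' k) : y = y' := by
  have H : ∀ n : ℕ, ∀ (hn : n < m), y ⟨n, hn⟩ = y' ⟨n, hn⟩ := by
    intro n
    induction n using Nat.strong_induction_on with
    | _ n IH =>
      intro hn
      by_cases hnt : n < t
      · exact hhead ⟨n, hn⟩ hnt
      · have hIH : ∀ k : Fin m, (k:ℕ) < n → y k = y' k := by
          intro k hk
          have := IH (k:ℕ) hk k.isLt
          have he : (⟨(k:ℕ), k.isLt⟩ : Fin m) = k := Fin.ext rfl
          rwa [he] at this
        have key : ∀ (w w' : Equiv.Perm (Fin m)), tailMono t w → tailMono t w' →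
            (∀ k : Fin m, (k:ℕ) < n → w k = w' k) → w ⟨n, hn⟩ ≤ w' ⟨n, hn⟩ := by
          intro w w' hw hw' hagree
          set k₀ := w.symm (w' ⟨n, hn⟩) with hk₀def
          have hk₀ : w k₀ = w' ⟨n, hn⟩ := w.apply_symm_apply _
          have hk₀n : n ≤ (k₀:ℕ) := by
            by_contra hlt
            push_neg at hlt
            have h1 := hagree k₀ hlt
            rw [hk₀] at h1
            have heq := w'.injective h1.symm
            have hval : (k₀:ℕ) = n := congrArg Fin.val heq
            omega
          rcases eq_or_lt_of_le hk₀n with he | hlt'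
          · have : k₀ = ⟨n, hn⟩ := Fin.ext he.symm
            rw [← hk₀, this]
          · rw [← hk₀]
            exact le_of_lt (hw ⟨n, hn⟩ k₀ (by rw [Fin.lt_def]; exact hlt') (show t ≤ n by omega))
        exact le_antisymm (key y y' hy hy' hIH) (key y' y hy' hy (fun k hk => (hIH k hk).symm))
  apply Equiv.ext
  intro k
  have := H (k:ℕ) k.isLt
  have he : (⟨(k:ℕ), k.isLt⟩ : Fin m) = k := Fin.ext rfl
  rwa [he] at this

lemma eVec_indep : LinearIndependent ℂ (eVec m) := by
  apply tri_indep_bot (σ := fun k : Fin m => k) Function.injective_id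
  · intro k; rw [eVec_self]; exact one_ne_zero
  · intro k; exact eVec_mem_FF (Nat.lt_succ_self _)

lemma FF_eq_span (i : ℕ) : FF m i = span ℂ (eVec m '' {k : Fin m | (k:ℕ) < i}) := by
  apply le_antisymm
  · intro v hv
    have hvsum : v = ∑ k, v k • eVec m k := (sum_smul_eVec v).symm
    rw [hvsum]
    classical
    rw [show (∑ k, v k • eVec m k)
        = ∑ k ∈ Finset.univ.filter (fun k : Fin m => (k:ℕ) < i), v k • eVec m k by
      symm
      apply Finset.sum_subset (Finset.subset_univ _)
      intro k _ hk
      have : i ≤ (k:ℕ) := by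
        by_contra hcon
        exact hk (Finset.mem_filter.2 ⟨Finset.mem_univ _, not_le.1 hcon⟩)
      rw [hv k this, zero_smul]]
    apply Submodule.sum_mem
    intro k hk
    exact Submodule.smul_mem _ _ (subset_span ⟨k, (Finset.mem_filter.1 hk).2, rfl⟩)
  · rw [span_le]
    rintro _ ⟨k, hk, rfl⟩
    exact eVec_mem_FF hk

lemma finrank_FF {i : ℕ} (hi : i ≤ m) : finrank ℂ ↥(FF m i) = i := by
  classical
  rw [FF_eq_span, finrank_span_image eVec_indep {k : Fin m | (k:ℕ) < i}]
  exact card_val_lt hi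

end S15


namespace S15
open Submodule Module Finset
variable {m : ℕ}

lemma ite_eq_iff' {A B : Prop} [Decidable A] [Decidable B]
    (h : (if A then 1 else 0) = (if B then 1 else 0)) : A ↔ B := by
  by_cases hA : A <;> by_cases hB : B <;> simp [hA, hB] at h ⊢ <;> tauto

lemma forced_span {t : ℕ} (ht : t ≤ m) {a : Mat m t} {g : Mat m m} {y : Equiv.Perm (Fin m)}
    (hgdc : g ∈ dcPlus (permMat m y)) (haI : a = g * Imn m t t) (hty : tailMono t y)
    {n : ℕ} (htn : t ≤ n) (hn : n < m) :
    Wlt g (n+1) = Wlt a t ⊔ FF m ((y ⟨n, hn⟩ : ℕ)+1) := by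
  classical
  set yn := y ⟨n, hn⟩ with hyn
  have hbij : (filter (fun k : Fin m => (k:ℕ) < n+1 ∧ ((y k):ℕ) < (yn:ℕ)+1) univ).card
      = (filter (fun i : Fin m => (i:ℕ) < (yn:ℕ)+1) univ).card := by
    apply Finset.card_bij (fun k _ => y k)
    · intro k hk
      simp only [Finset.mem_filter, Finset.mem_univ, true_and] at hk ⊢
      exact hk.2
    · intro k1 _ k2 _ h
      exact y.injective h
    · intro i hi
      simp only [Finset.mem_filter, Finset.mem_univ, true_and] at hi
      refine ⟨y.symm i, ?_, y.apply_symm_apply i⟩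
      simp only [Finset.mem_filter, Finset.mem_univ, true_and]
      constructor
      · by_contra hcon
        push_neg at hcon
        have hlt : (⟨n, hn⟩ : Fin m) < y.symm i := by
          rw [Fin.lt_def]
          simp only [Fin.val_mk]
          omega
        have hmono := hty ⟨n, hn⟩ (y.symm i) hlt (show t ≤ n from htn)
        rw [y.apply_symm_apply] at hmono
        have : (yn:ℕ) < (i:ℕ) := hmono
        omega
      · rw [y.apply_symm_apply]
        exact hi
  have hcard1 : (filter (fun k : Fin m => (k:ℕ) < n+1 ∧ ((y k):ℕ) < (yn:ℕ)+1) univ).card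
      = (yn:ℕ)+1 := by
    rw [hbij, card_val_lt (by omega)]
  have hFFle : FF m ((yn:ℕ)+1) ≤ Wlt g (n+1) := by
    have he1 := E1 hgdc (n+1) ((yn:ℕ)+1)
    rw [hcard1] at he1
    have hsub : Wlt g (n+1) ⊓ FF m ((yn:ℕ)+1) = FF m ((yn:ℕ)+1) := by
      apply Submodule.eq_of_le_of_finrank_le inf_le_right
      rw [he1, finrank_FF (by omega)]
    rw [← hsub]
    exact inf_le_left
  have hAle : Wlt a t ≤ Wlt g (n+1) := by
    rw [← Wlt_trunc ht haI (le_refl t)]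
    exact Wlt_mono g (by omega)
  have hsplit := card_filter_and_add
    (P := fun k : Fin m => (k:ℕ) < n+1 ∧ ((y k):ℕ) < (yn:ℕ)+1)
    (Q := fun k : Fin m => (k:ℕ) < t)
  have hA : (filter (fun k : Fin m =>
        ((k:ℕ) < n+1 ∧ ((y k):ℕ) < (yn:ℕ)+1) ∧ (k:ℕ) < t) univ)
      = (filter (fun k : Fin m => (k:ℕ) < t ∧ ((y k):ℕ) < (yn:ℕ)+1) univ) := by
    apply Finset.filter_congr
    intro k _
    constructor
    · rintro ⟨⟨h1, h2⟩, h3⟩; exact ⟨h3, h2⟩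
    · rintro ⟨h1, h2⟩; exact ⟨⟨by omega, h2⟩, h1⟩
  have hB : (filter (fun k : Fin m =>
        ((k:ℕ) < n+1 ∧ ((y k):ℕ) < (yn:ℕ)+1) ∧ ¬ (k:ℕ) < t) univ)
      = (filter (fun k : Fin m => (k:ℕ) < n+1 ∧ ¬ (k:ℕ) < t) univ) := by
    apply Finset.filter_congr
    intro k _
    constructor
    · rintro ⟨⟨h1, h2⟩, h3⟩; exact ⟨h1, h3⟩
    · rintro ⟨h1, h3⟩
      refine ⟨⟨h1, ?_⟩, h3⟩
      rcases eq_or_lt_of_le (show (k:ℕ) ≤ n by omega) with he | hlt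
      · have hke : k = ⟨n, hn⟩ := Fin.ext he
        rw [hke, ← hyn]
        omega
      · have hmono := hty k ⟨n, hn⟩ (by rw [Fin.lt_def]; simpa using hlt) (by omega)
        have : ((y k):ℕ) < (yn:ℕ) := hmono
        omega
  have hC : (filter (fun k : Fin m => (k:ℕ) < n+1 ∧ ¬ (k:ℕ) < t) univ).card = n+1-t := by
    have h2 := card_filter_and_add (P := fun k : Fin m => (k:ℕ) < n+1)
      (Q := fun k : Fin m => (k:ℕ) < t)
    have hD : (filter (fun k : Fin m => (k:ℕ) < n+1 ∧ (k:ℕ) < t) univ)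
        = (filter (fun k : Fin m => (k:ℕ) < t) univ) := by
      apply Finset.filter_congr
      intro k _
      constructor
      · rintro ⟨h1, h2⟩; exact h2
      · intro h1; exact ⟨by omega, h1⟩
    rw [hD] at h2
    have e1 := card_val_lt (m := m) (show t ≤ m by omega)
    have e2 := card_val_lt (m := m) (show n+1 ≤ m by omega)
    omega
  rw [hA, hB, hC, hcard1] at hsplit
  have hcnt2 : (filter (fun k : Fin m => (k:ℕ) < t ∧ ((y k):ℕ) < (yn:ℕ)+1) univ).card
      = t + (yn:ℕ) - n := by omega
  have hlow : n ≤ t + (yn:ℕ) := by omega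
  have hinfA : finrank ℂ ↥(Wlt a t ⊓ FF m ((yn:ℕ)+1)) = t + (yn:ℕ) - n := by
    rw [← Wlt_trunc ht haI (le_refl t), E1 hgdc t ((yn:ℕ)+1)]
    exact hcnt2
  have hrkA : finrank ℂ ↥(Wlt a t) = t := by
    rw [← Wlt_trunc ht haI (le_refl t), finrank_Wlt hgdc, card_val_lt ht]
  have hrkW : finrank ℂ ↥(Wlt g (n+1)) = n+1 := by
    rw [finrank_Wlt hgdc, card_val_lt (by omega)]
  have hsuprank : finrank ℂ ↥(Wlt a t ⊔ FF m ((yn:ℕ)+1)) = n+1 := by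
    have hq := Submodule.finrank_sup_add_finrank_inf_eq (Wlt a t) (FF m ((yn:ℕ)+1))
    rw [hinfA, hrkA, finrank_FF (show (yn:ℕ)+1 ≤ m by omega)] at hq
    omega
  exact (Submodule.eq_of_le_of_finrank_le (sup_le hAle hFFle)
    (by rw [hsuprank, hrkW])).symm

lemma uniqueness {t : ℕ} (ht : t ≤ m) {a : Mat m t} {y z y' z' : Equiv.Perm (Fin m)}
    (hty : tailMono t y) (hty' : tailMono t y')
    (ha : a ∈ Cset m t y z) (ha' : a ∈ Cset m t y' z') : y = y' ∧ z = z' := by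
  classical
  obtain ⟨g, ⟨hgdc, ⟨b, hbBm, hgb⟩⟩, haI⟩ := ha
  obtain ⟨g', ⟨hgdc', ⟨b', hbBm', hgb'⟩⟩, haI'⟩ := ha'
  have htr : ∀ j : ℕ, j ≤ t → Wlt g j = Wlt g' j := by
    intro j hj
    rw [Wlt_trunc ht haI hj, Wlt_trunc ht haI' hj]
  have hcntY : ∀ j : ℕ, j ≤ t → ∀ i : ℕ,
      (filter (fun k : Fin m => (k:ℕ) < j ∧ ((y k):ℕ) < i) univ).card
        = (filter (fun k : Fin m => (k:ℕ) < j ∧ ((y' k):ℕ) < i) univ).card := by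
    intro j hj i
    have e := E1 hgdc j i
    have e' := E1 hgdc' j i
    rw [htr j hj] at e
    rw [← e, ← e']
  have hyhead : ∀ k : Fin m, (k:ℕ) < t → y k = y' k := by
    intro k hk
    apply val_eq_of_lt_iff
    intro i
    have h1 := hcntY ((k:ℕ)+1) (by omega) i
    have h0 := hcntY (k:ℕ) (by omega) i
    have hs := card_step k.isLt (P := fun k' : Fin m => ((y k'):ℕ) < i)
    have hs' := card_step k.isLt (P := fun k' : Fin m => ((y' k'):ℕ) < i)
    simp only [Fin.eta] at hs hs'
    apply ite_eq_iff'
    omega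
  have hyy : y = y' := perm_tail_eq hty hty' hyhead
  subst hyy
  refine ⟨rfl, ?_⟩
  have hWall : ∀ j : ℕ, j ≤ m → Wlt g j = Wlt g' j := by
    intro j hj
    rcases le_or_gt j t with h | h
    · exact htr j h
    · have hn : j - 1 < m := by omega
      have htn : t ≤ j - 1 := by omega
      have hj1 : j = (j-1)+1 := by omega
      rw [hj1, forced_span ht hgdc haI hty htn hn, forced_span ht hgdc' haI' hty' htn hn]
  have hcntZ : ∀ j : ℕ, j ≤ m → ∀ i : ℕ,
      (filter (fun k' : Fin m => (k':ℕ) < j ∧ i ≤ ((z k'):ℕ)) univ).card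
        = (filter (fun k' : Fin m => (k':ℕ) < j ∧ i ≤ ((z' k'):ℕ)) univ).card := by
    intro j hj i
    have e := E2 hbBm hgb j i
    have e' := E2 hbBm' hgb' j i
    rw [hWall j hj] at e
    rw [← e, ← e']
  apply Equiv.ext
  intro k
  have hiff : ∀ i : ℕ, (i ≤ ((z k):ℕ)) ↔ (i ≤ ((z' k):ℕ)) := by
    intro i
    have h1 := hcntZ ((k:ℕ)+1) (by omega) i
    have h0 := hcntZ (k:ℕ) (by omega) i
    have hs := card_step k.isLt (P := fun k' : Fin m => i ≤ ((z k'):ℕ))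
    have hs' := card_step k.isLt (P := fun k' : Fin m => i ≤ ((z' k'):ℕ))
    simp only [Fin.eta] at hs hs'
    apply ite_eq_iff'
    omega
  apply Fin.ext
  have ha1 := (hiff ((z k):ℕ)).1 (le_refl _)
  have ha2 := (hiff ((z' k):ℕ)).2 (le_refl _)
  omega

end S15


theorem statement15 (m t : ℕ) (hm : 0 < m) (ht : t ≤ m)
    (r : Fin t → Fin m) (hr : StrictMono r) :
    (∀ a : Mat m t, a ∈ Cmr m t r ↔
      ∃ y z : Equiv.Perm (Fin m),
        tailMono t y ∧ headMono t z ∧ bruhatLE z y ∧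
        (∀ j : Fin t, z (Fin.castLE ht j) = r j) ∧
        a ∈ Cset m t y z) ∧
    (∀ y z y' z' : Equiv.Perm (Fin m),
      tailMono t y → headMono t z → bruhatLE z y → (∀ j : Fin t, z (Fin.castLE ht j) = r j) →
      tailMono t y' → headMono t z' → bruhatLE z' y' → (∀ j : Fin t, z' (Fin.castLE ht j) = r j) →
      (y, z) ≠ (y', z') → Disjoint (Cset m t y z) (Cset m t y' z')) := by
  constructor
  · intro a
    constructor
    · intro ha
      exact S15.forward ht r hr a ha
    · rintro ⟨y, z, h1, h2, h3, h4, h5⟩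
      exact S15.backward ht r h4 h5
  · intro y z y' z' hty hhz hbr hzr hty' hhz' hbr' hzr' hne
    rw [Set.disjoint_left]
    intro a ha ha'
    have h := S15.uniqueness ht hty hty' ha ha'
    exact hne (by rw [Prod.mk.injEq]; exact h)
end
end

section
/- Let m, n be positive integers and 0 ≤ t ≤ min(m,n). Every m×n partial permutation matrix of rank t can be written uniquely in the form y·I^{m,n}_t·v⁻¹ with y ∈ S_m satisfying y(t+1)<⋯<y(m) and v ∈ S_n satisfying both v(1)<⋯<v(t) and v(t+1)<⋯<v(n); and it can also be written uniquely in the form z·I^{m,n}_t·u⁻¹ with z ∈ S_m satisfying both z(1)<⋯<z(t) and z(t+1)<⋯<z(m), and u ∈ S_n satisfying u(t+1)<⋯<u(n) (all products of the corresponding permutation matrices). -/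
open Matrix

noncomputable section

/-- partial permutation matrix -/
def IsPPM {m n : ℕ} (w : Mat m n) : Prop :=
  (∀ i j, w i j = 0 ∨ w i j = 1) ∧
  (∀ i j j', w i j = 1 → w i j' = 1 → j = j') ∧
  (∀ i i' j, w i j = 1 → w i' j = 1 → i = i')

/-- number of entries equal to 1 -/
noncomputable def ppmRank {m n : ℕ} (w : Mat m n) : ℕ :=
  {p : Fin m × Fin n | w p.1 p.2 = 1}.ncard

lemma entry_lemma {m n t : ℕ} (y : Equiv.Perm (Fin m)) (v : Equiv.Perm (Fin n))
    (i : Fin m) (j : Fin n) :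
    (permMat m y * Imn m n t * permMat n v⁻¹) i j = Imn m n t (y⁻¹ i) (v⁻¹ j) := by
  have h1 : ∀ (A : Mat m n) (jj : Fin n), (permMat m y * A) i jj = A (y⁻¹ i) jj := by
    intro A jj
    rw [Matrix.mul_apply, Finset.sum_eq_single (y⁻¹ i)]
    · simp [permMat]
    · intro b _ hb
      have : ¬ i = y b := by intro h; exact hb (by simp [h])
      simp [permMat, this]
    · simp
  have h2 : (permMat m y * Imn m n t * permMat n v⁻¹) i j
      = ((permMat m y * Imn m n t)) i (v⁻¹ j) := by
    rw [Matrix.mul_apply, Finset.sum_eq_single (v⁻¹ j)]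
    · simp [permMat]
    · intro b _ hb
      simp [permMat, hb, eq_comm]
      exact fun h => absurd h hb
    · simp
  rw [h2, h1]

lemma buildPerm {k t : ℕ} (htk : t ≤ k) (A : Finset (Fin k)) (hA : A.card = t)
    (f : Fin t → Fin k) (hfinj : Function.Injective f) (hfA : ∀ s, f s ∈ A) :
    ∃ σ : Equiv.Perm (Fin k), (∀ s : Fin t, σ (Fin.castLE htk s) = f s) ∧ tailMono t σ := by
  have hAc : Aᶜ.card = k - t := by
    rw [Finset.card_compl, hA, Fintype.card_fin]
  set e := Aᶜ.orderEmbOfFin hAc with he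
  have ginj : Function.Injective (fun i : Fin k =>
      if h : (i : ℕ) < t then f ⟨i, h⟩ else e ⟨(i : ℕ) - t, by omega⟩) := by
    intro a b hab
    by_cases ha : (a : ℕ) < t <;> by_cases hb : (b : ℕ) < t <;>
      simp only [ha, hb, dif_pos, dif_neg, not_false_iff] at hab
    · have h' : (a : ℕ) = (b : ℕ) := Fin.mk.inj_iff.mp (hfinj hab)
      exact Fin.ext h'
    · exfalso
      have h1 : f ⟨a, ha⟩ ∈ A := hfA _
      rw [hab] at h1
      exact Finset.mem_compl.mp (Aᶜ.orderEmbOfFin_mem hAc _) h1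
    · exfalso
      have h1 : f ⟨b, hb⟩ ∈ A := hfA _
      rw [← hab] at h1
      exact Finset.mem_compl.mp (Aᶜ.orderEmbOfFin_mem hAc _) h1
    · have h1 : ((a : ℕ) - t) = ((b : ℕ) - t) := congrArg Fin.val (e.injective hab)
      have hak := a.isLt; have hbk := b.isLt
      exact Fin.ext (by omega)
  have σbij : Function.Bijective (fun i : Fin k =>
      if h : (i : ℕ) < t then f ⟨i, h⟩ else e ⟨(i : ℕ) - t, by omega⟩) :=
    Finite.injective_iff_bijective.mp ginj
  refine ⟨Equiv.ofBijective _ σbij, ?_, ?_⟩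
  · intro s
    show (if h : ((Fin.castLE htk s : Fin k) : ℕ) < t then f ⟨_, h⟩ else _) = f s
    rw [dif_pos (by simpa using s.isLt)]
    exact congrArg f (Fin.ext rfl)
  · intro i j hij hti
    have hij' : (i : ℕ) < (j : ℕ) := hij
    have htj : t ≤ (j : ℕ) := by omega
    show (if h : (i:ℕ) < t then f ⟨i,h⟩ else e ⟨(i:ℕ)-t, by omega⟩)
        < (if h : (j:ℕ) < t then f ⟨j,h⟩ else e ⟨(j:ℕ)-t, by omega⟩)
    rw [dif_neg (by omega), dif_neg (by omega)]
    exact e.strictMono (Fin.mk_lt_mk.mpr (by omega))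

lemma permTail_unique {k t : ℕ} (htk : t ≤ k) (σ τ : Equiv.Perm (Fin k))
    (hhead : ∀ i : Fin k, (i : ℕ) < t → σ i = τ i)
    (hσ : tailMono t σ) (hτ : tailMono t τ) : σ = τ := by
  set B : Finset (Fin k) := (Finset.univ.image (fun s : Fin t => σ (Fin.castLE htk s)))ᶜ with hB
  have hcard : (Finset.univ.image (fun s : Fin t => σ (Fin.castLE htk s))).card = t := by
    rw [Finset.card_image_of_injective _
      (fun a b hab => Fin.castLE_injective htk (σ.injective hab))]
    simp
  have hBcard : B.card = k - t := by
    rw [hB, Finset.card_compl, hcard, Fintype.card_fin]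
  have key : ∀ (ρ : Equiv.Perm (Fin k)), tailMono t ρ →
      (∀ i : Fin k, (i:ℕ) < t → ρ i = σ i) →
      (fun s : Fin (k - t) => ρ ⟨t + (s:ℕ), by omega⟩) = B.orderEmbOfFin hBcard := by
    intro ρ hρ hρσ
    apply Finset.orderEmbOfFin_unique hBcard
    · intro x
      rw [hB, Finset.mem_compl, Finset.mem_image]
      rintro ⟨s, -, hs⟩
      have h1 : ρ (Fin.castLE htk s) = σ (Fin.castLE htk s) := hρσ _ (by simpa using s.isLt)
      rw [← h1] at hs
      have h2 := congrArg Fin.val (ρ.injective hs)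
      simp at h2
      omega
    · intro a b hab
      have hab' : (a : ℕ) < (b : ℕ) := hab
      exact hρ _ _ (Fin.mk_lt_mk.mpr (by omega)) (Nat.le_add_right _ _)
  have h1 := key σ hσ (fun _ _ => rfl)
  have h2 := key τ hτ (fun i hi => (hhead i hi).symm)
  apply Equiv.ext
  intro i
  by_cases hi : (i : ℕ) < t
  · exact hhead i hi
  · have hik := i.isLt
    have hieq : i = (⟨t + ((i:ℕ) - t), by omega⟩ : Fin k) := Fin.ext (by simp; omega)
    rw [hieq]
    have e1 := congrFun h1 ⟨(i:ℕ) - t, by omega⟩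
    have e2 := congrFun h2 ⟨(i:ℕ) - t, by omega⟩
    simp only at e1 e2
    rw [e1, e2]

lemma part1 (m n t : ℕ) (hm : 0 < m) (htm : t ≤ m) (htn : t ≤ n)
    (w : Mat m n) (hw : IsPPM w) (hrank : ppmRank w = t) :
    ∃! p : Equiv.Perm (Fin m) × Equiv.Perm (Fin n),
      tailMono t p.1 ∧ headMono t p.2 ∧ tailMono t p.2 ∧
      w = permMat m p.1 * Imn m n t * permMat n p.2⁻¹ := by
  classical
  obtain ⟨h01, hrow, hcol⟩ := hw
  set S : Finset (Fin m × Fin n) := Finset.univ.filter (fun p => w p.1 p.2 = 1) with hS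
  have hmemS : ∀ p : Fin m × Fin n, p ∈ S ↔ w p.1 p.2 = 1 := by
    intro p; simp [hS]
  have hScard : S.card = t := by
    have h := hrank
    rw [ppmRank, show {p : Fin m × Fin n | w p.1 p.2 = 1} = ↑S by ext p; simp [hS],
      Set.ncard_coe_finset] at h
    exact h
  set C : Finset (Fin n) := S.image Prod.snd with hC
  have hCcard : C.card = t := by
    rw [hC, Finset.card_image_of_injOn, hScard]
    intro p hp q hq hpq
    rw [Finset.mem_coe, hmemS] at hp hq
    rw [← hpq] at hq
    exact Prod.ext (hcol _ _ _ hp hq) hpq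
  set R : Finset (Fin m) := S.image Prod.fst with hR
  have hRcard : R.card = t := by
    rw [hR, Finset.card_image_of_injOn, hScard]
    intro p hp q hq hpq
    rw [Finset.mem_coe, hmemS] at hp hq
    rw [← hpq] at hq
    exact Prod.ext hpq (hrow _ _ _ hp hq)
  haveI : Nonempty (Fin m) := ⟨⟨0, hm⟩⟩
  set ρ : Fin n → Fin m := fun j =>
    if h : ∃ i, w i j = 1 then h.choose else Classical.arbitrary _ with hρ
  have hρ_eq : ∀ i j, w i j = 1 → ρ j = i := by
    intro i j hij
    have hex : ∃ i, w i j = 1 := ⟨i, hij⟩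
    rw [hρ]; simp only [dif_pos hex]
    exact hcol _ _ _ hex.choose_spec hij
  have hρ_mem : ∀ j, j ∈ C → w (ρ j) j = 1 := by
    intro j hj
    rw [hC, Finset.mem_image] at hj
    obtain ⟨p, hp, rfl⟩ := hj
    rw [hmemS] at hp
    rw [hρ_eq _ _ hp]; exact hp
  set cemb := C.orderEmbOfFin hCcard with hcemb
  set fy : Fin t → Fin m := fun s => ρ (cemb s) with hfy
  have hfyone : ∀ s : Fin t, w (fy s) (cemb s) = 1 :=
    fun s => hρ_mem _ (C.orderEmbOfFin_mem hCcard s)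
  have hfyinj : Function.Injective fy := by
    intro s s' hss
    have h1 := hfyone s
    have h2 := hfyone s'
    rw [hss] at h1
    exact cemb.injective (hrow _ _ _ h1 h2)
  have hfyR : ∀ s, fy s ∈ R := by
    intro s
    rw [hR, Finset.mem_image]
    exact ⟨(fy s, cemb s), (hmemS _).mpr (hfyone s), rfl⟩
  obtain ⟨v, hvhead, hvtail⟩ := buildPerm htn C hCcard cemb cemb.injective
    (fun s => C.orderEmbOfFin_mem hCcard s)
  obtain ⟨y, hyhead, hytail⟩ := buildPerm htm R hRcard fy hfyinj hfyR
  have hvHM : headMono t v := by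
    intro i j hij hjt
    have hij' : (i : ℕ) < (j : ℕ) := hij
    have hit : (i : ℕ) < t := by omega
    have hi : i = Fin.castLE htn ⟨(i:ℕ), hit⟩ := Fin.ext rfl
    have hj : j = Fin.castLE htn ⟨(j:ℕ), hjt⟩ := Fin.ext rfl
    rw [hi, hj, hvhead, hvhead]
    exact cemb.strictMono (Fin.mk_lt_mk.mpr hij')
  -- key fact characterizing the matrix equation
  have hkey : ∀ (y' : Equiv.Perm (Fin m)) (v' : Equiv.Perm (Fin n)) (s : Fin t),
      (y')⁻¹ (y' (Fin.castLE htm s)) = Fin.castLE htm s ∧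
      (v')⁻¹ (v' (Fin.castLE htn s)) = Fin.castLE htn s :=
    fun y' v' s => ⟨Equiv.symm_apply_apply _ _, Equiv.symm_apply_apply _ _⟩
  have heqmat : w = permMat m y * Imn m n t * permMat n v⁻¹ := by
    ext i j
    rw [entry_lemma]
    show w i j = if ((y⁻¹ i : ℕ) = ((v⁻¹ j : Fin n) : ℕ) ∧ (y⁻¹ i : ℕ) < t) then 1 else 0
    rcases h01 i j with h0 | h1
    · rw [h0, eq_comm, if_neg]
      rintro ⟨heq, hlt⟩
      set s : Fin t := ⟨(y⁻¹ i : ℕ), hlt⟩ with hs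
      have hyi : y⁻¹ i = Fin.castLE htm s := Fin.ext rfl
      have hvj : v⁻¹ j = Fin.castLE htn s := Fin.ext heq.symm
      have hi2 : i = y (Fin.castLE htm s) := by
        rw [← hyi]; exact (Equiv.apply_symm_apply _ _).symm
      have hj2 : j = v (Fin.castLE htn s) := by
        rw [← hvj]; exact (Equiv.apply_symm_apply _ _).symm
      rw [hyhead] at hi2
      rw [hvhead] at hj2
      have := hfyone s
      rw [← hi2, ← hj2] at this
      rw [this] at h0
      exact one_ne_zero h0
    · rw [h1, eq_comm, if_pos]
      have hjC : j ∈ C := by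
        rw [hC, Finset.mem_image]
        exact ⟨(i, j), (hmemS _).mpr h1, rfl⟩
      have : (j : Fin n) ∈ Set.range cemb := by
        rw [hcemb, Finset.range_orderEmbOfFin]; exact hjC
      obtain ⟨s, hs⟩ := this
      have hyi : y (Fin.castLE htm s) = i := by
        rw [hyhead, hfy]
        show ρ (cemb s) = i
        rw [hs]; exact hρ_eq _ _ h1
      have hvj : v (Fin.castLE htn s) = j := by rw [hvhead]; exact hs
      have h1' : y⁻¹ i = Fin.castLE htm s := by
        rw [← hyi]; exact Equiv.symm_apply_apply _ _
      have h2' : v⁻¹ j = Fin.castLE htn s := by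
        rw [← hvj]; exact Equiv.symm_apply_apply _ _
      rw [h1', h2']
      exact ⟨rfl, by simpa using s.isLt⟩
  refine ⟨(y, v), ⟨hytail, hvHM, hvtail, heqmat⟩, ?_⟩
  rintro ⟨y', v'⟩ ⟨hy't, hv'h, hv't, heq'⟩
  have hent : ∀ i j, w i j = Imn m n t ((y')⁻¹ i) ((v')⁻¹ j) := by
    intro i j; rw [heq']; exact entry_lemma _ _ _ _
  have hone : ∀ s : Fin t, w (y' (Fin.castLE htm s)) (v' (Fin.castLE htn s)) = 1 := by
    intro s
    rw [hent, Equiv.Perm.inv_def, Equiv.Perm.inv_def, Equiv.symm_apply_apply, Equiv.symm_apply_apply]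
    show (if _ ∧ _ then (1:ℂ) else 0) = 1
    rw [if_pos ⟨rfl, by simpa using s.isLt⟩]
  have hv'C : ∀ s : Fin t, v' (Fin.castLE htn s) ∈ C := by
    intro s
    rw [hC, Finset.mem_image]
    exact ⟨(y' (Fin.castLE htm s), v' (Fin.castLE htn s)), (hmemS _).mpr (hone s), rfl⟩
  have hv'mono : StrictMono (fun s : Fin t => v' (Fin.castLE htn s)) := by
    intro a b hab
    exact hv'h _ _ (Fin.mk_lt_mk.mpr hab) (by simpa using b.isLt)
  have hv'head : (fun s : Fin t => v' (Fin.castLE htn s)) = cemb :=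
    Finset.orderEmbOfFin_unique hCcard hv'C hv'mono
  have hvv : ∀ s : Fin t, v' (Fin.castLE htn s) = v (Fin.castLE htn s) := by
    intro s
    rw [hvhead]
    exact congrFun hv'head s
  have hyy : ∀ s : Fin t, y' (Fin.castLE htm s) = y (Fin.castLE htm s) := by
    intro s
    have h1 := hone s
    rw [hvv] at h1
    have h2 : w (y (Fin.castLE htm s)) (v (Fin.castLE htn s)) = 1 := by
      rw [hyhead, hvhead]; exact hfyone s
    exact hcol _ _ _ h1 h2
  have hveq : v' = v := by
    apply permTail_unique htn v' v _ hv't hvtail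
    intro i hi
    have : i = Fin.castLE htn ⟨(i:ℕ), hi⟩ := Fin.ext rfl
    rw [this]; exact hvv _
  have hyeq : y' = y := by
    apply permTail_unique htm y' y _ hy't hytail
    intro i hi
    have : i = Fin.castLE htm ⟨(i:ℕ), hi⟩ := Fin.ext rfl
    rw [this]; exact hyy _
  exact Prod.ext hyeq hveq

lemma isPPM_transpose {m n : ℕ} {w : Mat m n} (hw : IsPPM w) : IsPPM wᵀ := by
  obtain ⟨h01, hrow, hcol⟩ := hw
  refine ⟨fun i j => h01 j i, fun i j j' h h' => hcol j j' i h h',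
    fun i i' j h h' => hrow j i i' h h'⟩

lemma ppmRank_transpose {m n : ℕ} (w : Mat m n) : ppmRank wᵀ = ppmRank w := by
  rw [ppmRank, ppmRank]
  have h : {p : Fin n × Fin m | wᵀ p.1 p.2 = 1}
      = Prod.swap '' {p : Fin m × Fin n | w p.1 p.2 = 1} := by
    ext ⟨a, b⟩
    constructor
    · intro hab; exact ⟨(b, a), hab, rfl⟩
    · rintro ⟨⟨x, y⟩, hxy, heq⟩
      have h1 : y = a := congrArg Prod.fst heq
      have h2 : x = b := congrArg Prod.snd heq
      subst h1; subst h2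
      exact hxy
  rw [h, Set.ncard_image_of_injective _ Prod.swap_injective]

lemma transpose_decomp {m n t : ℕ} (y : Equiv.Perm (Fin m)) (v : Equiv.Perm (Fin n)) :
    (permMat m y * Imn m n t * permMat n v⁻¹)ᵀ = permMat n v * Imn n m t * permMat m y⁻¹ := by
  ext a b
  rw [Matrix.transpose_apply, entry_lemma, entry_lemma]
  show (if ((y⁻¹ b : ℕ) = ((v⁻¹ a : Fin n) : ℕ) ∧ (y⁻¹ b : ℕ) < t) then (1:ℂ) else 0)
     = (if (((v⁻¹ a : Fin n) : ℕ) = (y⁻¹ b : ℕ) ∧ ((v⁻¹ a : Fin n) : ℕ) < t) then 1 else 0)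
  exact if_congr (by omega) rfl rfl

theorem statement17 (m n t : ℕ) (hm : 0 < m) (hn : 0 < n) (htm : t ≤ m) (htn : t ≤ n)
    (w : Mat m n) (hw : IsPPM w) (hrank : ppmRank w = t) :
    (∃! p : Equiv.Perm (Fin m) × Equiv.Perm (Fin n),
      tailMono t p.1 ∧ headMono t p.2 ∧ tailMono t p.2 ∧
      w = permMat m p.1 * Imn m n t * permMat n p.2⁻¹) ∧
    (∃! p : Equiv.Perm (Fin m) × Equiv.Perm (Fin n),
      headMono t p.1 ∧ tailMono t p.1 ∧ tailMono t p.2 ∧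
      w = permMat m p.1 * Imn m n t * permMat n p.2⁻¹) := by
  constructor
  · exact part1 m n t hm htm htn w hw hrank
  · have hT := part1 n m t hn htn htm wᵀ (isPPM_transpose hw)
      (by rw [ppmRank_transpose, hrank])
    obtain ⟨⟨v, y⟩, ⟨h1, h2, h3, h4⟩, huniq⟩ := hT
    refine ⟨(y, v), ⟨h2, h3, h1, ?_⟩, ?_⟩
    · have h5 : wᵀ = (permMat m y * Imn m n t * permMat n v⁻¹)ᵀ := by
        rw [h4]; exact (transpose_decomp y v).symm
      calc w = wᵀᵀ := (Matrix.transpose_transpose w).symm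
        _ = _ := by rw [h5, Matrix.transpose_transpose]
    · rintro ⟨z, u⟩ ⟨hz1, hz2, hu, heq⟩
      have h6 : wᵀ = permMat n u * Imn n m t * permMat m z⁻¹ := by
        rw [heq]; exact transpose_decomp z u
      have h7 := huniq (u, z) ⟨hu, hz1, hz2, h6⟩
      have hu' : u = v := congrArg Prod.fst h7
      have hz' : z = y := congrArg Prod.snd h7
      rw [hu', hz']
end
end
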